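/- arXiv:2101.12542 — 6 statements merged into one kernel-verified Lean document; each statement's English description precedes it below -/
import Mathlib

section
/- Let X and Y be real Banach spaces, let K ⊆ Y be a convex cone with nonempty interior, let R ⊆ X be a set and f : X → Y a mapping, and let x̄ ∈ R. Suppose that (i) f is K-Lipschitz near x̄ with constant ℓ_f > 0 and vector e ∈ int K ∩ B(0,1), and (ii) ψ : X → [0,+∞] is a local error bound function for R near x̄ (with S = X). Then for any ℓ ≥ ℓ_f, if x̄ is a locally weakly efficient solution of the problem of minimizing f over R, then x̄ is a locally weakly efficient solution of the unconstrained penalized problem: there exists δ > 0 such that there is no x ∈ B(x̄,δ) with ψ(x) < +∞ and f(x) + ℓψ(x)e ∈ f(x̄) − int K. -/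
open Filter Topology Metric Set Pointwise
open scoped ENNReal NNReal

noncomputable section

/-- The `r`-enlargement `B(A,r)` of a set `A`. -/
def enlarge {Z : Type*} [SeminormedAddCommGroup Z] (A : Set Z) (r : ℝ) : Set Z :=
  {z | Metric.infDist z A ≤ r}

/-- Merit function `ν(x) = sup_{z ∈ G(x)} dist(z, C)`, with values in `[0,∞]`. -/
def merit {X Z : Type*} [SeminormedAddCommGroup Z] (G : X → Set Z) (C : Set Z) (x : X) : ℝ≥0∞ :=
  ⨆ z ∈ G x, ENNReal.ofReal (Metric.infDist z C)

/-- Lower semicontinuity of a set-valued map at a point. -/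
def LscAt {X Z : Type*} [TopologicalSpace X] [TopologicalSpace Z] (G : X → Set Z) (x : X) : Prop :=
  ∀ V : Set Z, IsOpen V → (G x ∩ V).Nonempty → ∃ U ∈ nhds x, ∀ u ∈ U, (G u ∩ V).Nonempty

/-- `G` is l.s.c. at every point of some ball around `xb`. -/
def LscAround {X Z : Type*} [SeminormedAddCommGroup X] [TopologicalSpace Z]
    (G : X → Set Z) (xb : X) : Prop :=
  ∃ ρ > 0, ∀ x ∈ Metric.closedBall xb ρ, LscAt G x

/-- `G` is metrically `C`-increasing around `xb` relative to `S`, with witnesses `α > 1`, `δ > 0`. -/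
def MetIncrWith {X Z : Type*} [SeminormedAddCommGroup X] [SeminormedAddCommGroup Z]
    (G : X → Set Z) (S : Set X) (C : Set Z) (xb : X) (α δ : ℝ) : Prop :=
  ∀ x ∈ Metric.closedBall xb δ ∩ S, ∀ r ∈ Set.Ioo (0:ℝ) δ,
    ∃ z ∈ Metric.closedBall x r ∩ S, enlarge (G z) (α * r) ⊆ enlarge (G x + C) r

/-- `G` is metrically `C`-increasing around `xb` relative to `S`. -/
def MetIncr {X Z : Type*} [SeminormedAddCommGroup X] [SeminormedAddCommGroup Z]
    (G : X → Set Z) (S : Set X) (C : Set Z) (xb : X) : Prop :=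
  ∃ α > 1, ∃ δ > 0, MetIncrWith G S C xb α δ

/-- The exact bound of metric `C`-increase of `G` around `xb`, relative to `S`. -/
def incrBound {X Z : Type*} [SeminormedAddCommGroup X] [SeminormedAddCommGroup Z]
    (G : X → Set Z) (S : Set X) (C : Set Z) (xb : X) : ℝ≥0∞ :=
  sSup {a : ℝ≥0∞ | ∃ α : ℝ, a = ENNReal.ofReal α ∧ 1 < α ∧ ∃ δ > 0, MetIncrWith G S C xb α δ}

open Classical in
/-- Strong slope of `φ` relative to `S` at `x`: `0` if `x` is a local minimizer of `φ` on `S`,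
otherwise `inf_{r>0} sup_{z ∈ B(x,r)∩S, z ≠ x} (φ(x) − φ(z))/‖x−z‖`. -/
def strongSlope {X : Type*} [SeminormedAddCommGroup X] (φ : X → ℝ≥0∞) (S : Set X) (x : X) :
    ℝ≥0∞ :=
  if ∃ r > 0, ∀ z ∈ S ∩ Metric.closedBall x r, φ x ≤ φ z then 0
  else ⨅ r ∈ Set.Ioi (0:ℝ), ⨆ z ∈ (S ∩ Metric.closedBall x r) \ {x},
    (φ x - φ z) / ENNReal.ofReal ‖x - z‖

/-- `ψ` is a local error bound function for `R` near `xb`, relative to `S`. -/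
def LocErrBoundFun {X : Type*} [SeminormedAddCommGroup X]
    (ψ : X → ℝ≥0∞) (R S : Set X) (xb : X) : Prop :=
  ∃ δ > 0, (∀ x ∈ Metric.closedBall xb δ ∩ S, ENNReal.ofReal (Metric.infDist x R) ≤ ψ x) ∧
    ∀ x ∈ R, ψ x = ENNReal.ofReal (Metric.infDist x R)

/-- `f` is `K`-Lipschitz near `xb` with constant `ℓ` and vector `e`. -/
def KLipschitzNearWith {X Y : Type*} [SeminormedAddCommGroup X] [SeminormedAddCommGroup Y]
    [NormedSpace ℝ Y] (f : X → Y) (K : Set Y) (xb : X) (ℓ : ℝ) (e : Y) : Prop :=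
  ∃ δ > 0, ∀ x₁ ∈ Metric.closedBall xb δ, ∀ x₂ ∈ Metric.closedBall xb δ,
    f x₁ - f x₂ + (ℓ * ‖x₁ - x₂‖) • e ∈ K

/-- `xb` is a locally weakly efficient solution of minimizing `f` over `R`
(w.r.t. the ordering cone `K`). -/
def LocWeakEffOn {X Y : Type*} [SeminormedAddCommGroup X] [SeminormedAddCommGroup Y]
    (f : X → Y) (R : Set X) (K : Set Y) (xb : X) : Prop :=
  ∃ δ > 0, ∀ x ∈ R ∩ Metric.closedBall xb δ, f xb - f x ∉ interior K

/-- `xb` is a locally efficient solution of minimizing `f` over `R`. -/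
def LocEffOn {X Y : Type*} [SeminormedAddCommGroup X] [SeminormedAddCommGroup Y]
    (f : X → Y) (R : Set X) (K : Set Y) (xb : X) : Prop :=
  ∃ δ > 0, ∀ x ∈ R ∩ Metric.closedBall xb δ, f xb - f x ∈ K → f x = f xb

/-- Contingent (Bouligand tangent) cone to `A` at `xb`. -/
def contingentCone {X : Type*} [SeminormedAddCommGroup X] [NormedSpace ℝ X]
    (A : Set X) (xb : X) : Set X :=
  {v | ∃ (vn : ℕ → X) (tn : ℕ → ℝ), Filter.Tendsto vn Filter.atTop (nhds v) ∧
    Filter.Tendsto tn Filter.atTop (nhds 0) ∧ (∀ n, 0 < tn n) ∧ ∀ n, xb + tn n • vn n ∈ A}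

/-- Feasible direction cone to `A` at `xb`. -/
def feasDirCone {X : Type*} [SeminormedAddCommGroup X] [NormedSpace ℝ X]
    (A : Set X) (xb : X) : Set X :=
  {v | ∃ δ > 0, ∀ t ∈ Set.Ioo (0:ℝ) δ, xb + t • v ∈ A}

/-- Weak feasible direction cone to `A` at `xb`. -/
def weakFeasDirCone {X : Type*} [SeminormedAddCommGroup X] [NormedSpace ℝ X]
    (A : Set X) (xb : X) : Set X :=
  {v | ∀ ε > 0, ∃ t ∈ Set.Ioo (0:ℝ) ε, xb + t • v ∈ A}

/-- Fréchet upper subdifferential of an `[0,∞]`-valued function `φ` (finite at `xb`) at `xb`. -/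
def FUpperSubdiff {X : Type*} [NormedAddCommGroup X] [NormedSpace ℝ X]
    (φ : X → ℝ≥0∞) (xb : X) : Set (X →L[ℝ] ℝ) :=
  {p | ∀ ε > 0, ∃ δ > 0, ∀ x ∈ Metric.ball xb δ, x ≠ xb →
    φ x ≠ ⊤ ∧ (φ x).toReal - (φ xb).toReal - p (x - xb) ≤ ε * ‖x - xb‖}

/-- `d` is the directional derivative of `f` at `xb` in direction `v`. -/
def HasDirDerivAt {X Y : Type*} [SeminormedAddCommGroup X] [NormedSpace ℝ X]
    [SeminormedAddCommGroup Y] [NormedSpace ℝ Y] (f : X → Y) (xb v : X) (d : Y) : Prop :=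
  Filter.Tendsto (fun t : ℝ => t⁻¹ • (f (xb + t • v) - f xb)) (nhdsWithin 0 (Set.Ioi 0)) (nhds d)

/-- `H` is an outer prederivative of `G` at `xb`. -/
def OuterPrederivAt {X Z : Type*} [SeminormedAddCommGroup X] [NormedSpace ℝ X]
    [SeminormedAddCommGroup Z] [NormedSpace ℝ Z] (G H : X → Set Z) (xb : X) : Prop :=
  (∀ t : ℝ, 0 < t → ∀ v, H (t • v) = t • H v) ∧
  ∀ ε > 0, ∃ δ > 0, ∀ x ∈ Metric.closedBall xb δ,
    G x ⊆ G xb + H (x - xb) + Metric.closedBall 0 (ε * ‖x - xb‖)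

/-- `H` is Lipschitz with respect to the Hausdorff distance. -/
def HausLipschitz {X Z : Type*} [SeminormedAddCommGroup X] [SeminormedAddCommGroup Z]
    (H : X → Set Z) : Prop :=
  ∃ l : ℝ, 0 ≤ l ∧ ∀ x₁ x₂ : X,
    EMetric.hausdorffEdist (H x₁) (H x₂) ≤ ENNReal.ofReal (l * ‖x₁ - x₂‖)

/-- `h` is the B-derivative of `f` at `xb`. -/
def IsBDerivAt {X Y : Type*} [NormedAddCommGroup X] [NormedSpace ℝ X]
    [NormedAddCommGroup Y] [NormedSpace ℝ Y] (f : X → Y) (h : X → Y) (xb : X) : Prop :=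
  Continuous h ∧ (∀ t : ℝ, 0 < t → ∀ v, h (t • v) = t • h v) ∧
  Filter.Tendsto (fun x => ‖x - xb‖⁻¹ • (f x - f xb - h (x - xb)))
    (nhdsWithin xb {xb}ᶜ) (nhds 0)

/-- Upper inverse image `H⁺¹(C)` of `C` through `H`. -/
def upperInv {X Z : Type*} (H : X → Set Z) (C : Set Z) : Set X := {x | H x ⊆ C}

end

private lemma cone_add_mem {Y : Type*} [AddCommMonoid Y] [Module ℝ Y] {K : Set Y}
    (hKconv : Convex ℝ K) (hKcone : ∀ t : ℝ, 0 < t → ∀ y ∈ K, t • y ∈ K)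
    {a b : Y} (ha : a ∈ K) (hb : b ∈ K) : a + b ∈ K := by
  have h := hKconv ha hb (by norm_num : (0:ℝ) ≤ 1/2) (by norm_num : (0:ℝ) ≤ 1/2) (by norm_num)
  have h2 := hKcone 2 (by norm_num) _ h
  rwa [smul_add, smul_smul, smul_smul, show (2:ℝ)*(1/2) = 1 by norm_num, one_smul, one_smul] at h2

private lemma interior_add_mem' {Y : Type*} [SeminormedAddCommGroup Y] [NormedSpace ℝ Y]
    {K : Set Y} (hKconv : Convex ℝ K) (hKcone : ∀ t : ℝ, 0 < t → ∀ y ∈ K, t • y ∈ K)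
    {w k : Y} (hw : w ∈ interior K) (hk : k ∈ K) : w + k ∈ interior K := by
  obtain ⟨r, hr, hball⟩ := Metric.isOpen_iff.mp isOpen_interior w hw
  have hsub : Metric.ball (w + k) r ⊆ K := by
    intro z hz
    have hz' : z - k ∈ Metric.ball w r := by
      simp only [Metric.mem_ball, dist_eq_norm] at hz ⊢
      have : z - k - w = z - (w + k) := by abel
      rw [this]; exact hz
    have : z - k ∈ K := interior_subset (hball hz')
    have := cone_add_mem hKconv hKcone this hk
    simpa using this
  exact interior_maximal hsub Metric.isOpen_ball (Metric.mem_ball_self hr)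

set_option maxHeartbeats 1000000 in
/-- vector Clarke penalization principle, weak efficiency case. -/
theorem statement_0
    {X Y : Type*} [NormedAddCommGroup X] [NormedSpace ℝ X] [CompleteSpace X]
    [NormedAddCommGroup Y] [NormedSpace ℝ Y] [CompleteSpace Y]
    (K : Set Y) (hKconv : Convex ℝ K)
    (hKcone : ∀ t : ℝ, 0 < t → ∀ y ∈ K, t • y ∈ K) (hKint : (interior K).Nonempty)
    (R : Set X) (f : X → Y) (xb : X) (hxb : xb ∈ R)
    (ℓf : ℝ) (hℓf : 0 < ℓf) (e : Y) (he : e ∈ interior K) (hnorme : ‖e‖ ≤ 1)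
    (hLip : KLipschitzNearWith f K xb ℓf e)
    (ψ : X → ℝ≥0∞) (hψ : LocErrBoundFun ψ R Set.univ xb)
    (ℓ : ℝ) (hℓ : ℓf ≤ ℓ)
    (hweff : LocWeakEffOn f R K xb) :
    ∃ δ > 0, ∀ x ∈ Metric.closedBall xb δ, ψ x ≠ ⊤ →
      f xb - (f x + (ℓ * (ψ x).toReal) • e) ∉ interior K := by
  obtain ⟨δ₁, hδ₁, hL⟩ := hLip
  obtain ⟨δ₂, hδ₂, hub, -⟩ := hψ
  obtain ⟨δ₃, hδ₃, hw⟩ := hweff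
  set m := min δ₁ (min δ₂ δ₃) with hm
  have hmpos : 0 < m := lt_min hδ₁ (lt_min hδ₂ hδ₃)
  set δ := m / 3 with hδdef
  have hδpos : 0 < δ := by positivity
  refine ⟨δ, hδpos, ?_⟩
  intro x hx hψx hcontra
  set w := f xb - (f x + (ℓ * (ψ x).toReal) • e) with hwdef
  -- a ball around w inside interior K
  obtain ⟨r, hr, hball⟩ := Metric.isOpen_iff.mp isOpen_interior w hcontra
  set ε := min δ (r / (2 * ℓf)) with hε
  have hεpos : 0 < ε := lt_min hδpos (by positivity)
  have hεδ : ε ≤ δ := min_le_left _ _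
  have hεr : ℓf * ε ≤ r / 2 := by
    have : ε ≤ r / (2 * ℓf) := min_le_right _ _
    calc ℓf * ε ≤ ℓf * (r / (2 * ℓf)) := by nlinarith
      _ = r / 2 := by field_simp
  -- pick u ∈ R close to x
  have hRne : R.Nonempty := ⟨xb, hxb⟩
  have hlt : Metric.infDist x R < Metric.infDist x R + ε := lt_add_of_pos_right _ hεpos
  obtain ⟨u, huR, hdu⟩ := (Metric.infDist_lt_iff hRne).mp hlt
  have hdxxb : dist x xb ≤ δ := Metric.mem_closedBall.mp hx
  have hinfle : Metric.infDist x R ≤ δ :=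
    le_trans (Metric.infDist_le_dist_of_mem hxb) hdxxb
  have hdu2 : dist x u ≤ 2 * δ := by linarith [hdu, hεδ, hinfle]
  have hduxb : dist u xb ≤ m := by
    calc dist u xb ≤ dist u x + dist x xb := dist_triangle _ _ _
      _ ≤ 2 * δ + δ := by rw [dist_comm]; linarith
      _ = m := by rw [hδdef]; ring
  have hδ₁' : δ ≤ δ₁ := by
    have h : m ≤ δ₁ := min_le_left _ _
    linarith
  have hδ₂' : δ ≤ δ₂ := by
    have : m ≤ δ₂ := le_trans (min_le_right _ _) (min_le_left _ _)
    linarith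
  have hδ₃m : m ≤ δ₃ := le_trans (min_le_right _ _) (min_le_right _ _)
  have hδ₁m : m ≤ δ₁ := min_le_left _ _
  -- ψ lower bound
  have hψlb : Metric.infDist x R ≤ (ψ x).toReal := by
    have h1 := hub x ⟨Metric.mem_closedBall.mp hx |>.trans hδ₂' |> Metric.mem_closedBall.mpr,
      Set.mem_univ x⟩
    have := ENNReal.toReal_mono hψx h1
    rwa [ENNReal.toReal_ofReal Metric.infDist_nonneg] at this
  have hψ0 : 0 ≤ (ψ x).toReal := ENNReal.toReal_nonneg
  -- Lipschitz estimate
  have hxball : x ∈ Metric.closedBall xb δ₁ :=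
    Metric.mem_closedBall.mpr (le_trans hdxxb hδ₁')
  have huball : u ∈ Metric.closedBall xb δ₁ :=
    Metric.mem_closedBall.mpr (le_trans hduxb hδ₁m)
  have hk' : f x - f u + (ℓf * ‖x - u‖) • e ∈ K := hL x hxball u huball
  set c := ℓ * (ψ x).toReal - ℓf * ‖x - u‖ with hc
  have hnorm_xu : ‖x - u‖ = dist x u := (dist_eq_norm x u).symm
  have hclb : -(ℓf * ε) < c := by
    have h1 : ℓf * ‖x - u‖ < ℓf * (Metric.infDist x R + ε) := by
      rw [hnorm_xu]; nlinarith
    have h2 : ℓf * Metric.infDist x R ≤ ℓ * (ψ x).toReal := by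
      nlinarith [Metric.infDist_nonneg (x := x) (s := R)]
    simp only [hc]; nlinarith
  -- w + c • e ∈ interior K
  have heK : e ∈ K := interior_subset he
  have hwce : w + c • e ∈ interior K := by
    rcases lt_trichotomy c 0 with hc0 | hc0 | hc0
    · have : ‖c • e‖ < r := by
        rw [norm_smul, Real.norm_eq_abs, abs_of_neg hc0]
        have : -c < ℓf * ε := by linarith
        nlinarith [norm_nonneg e]
      have : w + c • e ∈ Metric.ball w r := by
        simp only [Metric.mem_ball, dist_eq_norm]
        have h : w + c • e - w = c • e := by abel
        rwa [h]
      exact hball this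
    · rw [hc0, zero_smul, add_zero]; exact hcontra
    · exact interior_add_mem' hKconv hKcone hcontra (hKcone c hc0 e heK)
  -- conclude
  have halg : f xb - f u = (w + c • e) + (f x - f u + (ℓf * ‖x - u‖) • e) := by
    simp only [hwdef, hc]
    module
  have hfin : f xb - f u ∈ interior K := by
    rw [halg]; exact interior_add_mem' hKconv hKcone hwce hk'
  exact hw u ⟨huR, Metric.mem_closedBall.mpr (le_trans hduxb hδ₃m)⟩ hfin
end

section
/- Let X, Z be real Banach spaces, S ⊆ X a nonempty closed set, C ⊆ Z a proper closed convex cone with C ≠ {0}, and G : X ⇉ Z a set-valued mapping with G(x) ≠ ∅ for all x ∈ X. Let ν(x) = sup_{z ∈ G(x)} dist(z,C) be the merit function, R = S ∩ {x : G(x) ⊆ C}, and let x̄ ∈ R. Suppose that (i) G is lower semicontinuous at every point of some ball around x̄, and (ii) there exist σ > 0 and r > 0 such that the strong slope of ν relative to S at x is at least σ for every x ∈ B(x̄,r) ∩ S with ν(x) > 0. Then the function ψ = σ⁻¹ν is a local error bound function for R near x̄ (relative to S). -/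
open Filter Topology Metric Set Pointwise
open scoped ENNReal NNReal

section AuxLemmas
open Filter Topology Metric Set
open scoped ENNReal NNReal

private lemma ekeland_aux {X : Type*} [MetricSpace X] [CompleteSpace X]
    (A : Set X) (hA : IsClosed A)
    (φ : X → ℝ≥0∞)
    (hlsc : ∀ y ∈ A, ∀ c < φ y, ∀ᶠ z in nhds y, c < φ z)
    (x₀ : X) (hx₀ : x₀ ∈ A) (hφx₀ : φ x₀ ≠ ⊤) (κ : ℝ) (hκ : 0 < κ) :
    ∃ y ∈ A, (φ y + ENNReal.ofReal (κ * dist y x₀) ≤ φ x₀ ∧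
      ∀ z ∈ A, φ z + ENNReal.ofReal (κ * dist z y) ≤ φ y → z = y) := by
  classical
  set F : X → Set X := fun x => {z | z ∈ A ∧ φ z + ENNReal.ofReal (κ * dist z x) ≤ φ x}
    with hF
  have hFself : ∀ x ∈ A, x ∈ F x := by
    intro x hx
    refine ⟨hx, ?_⟩
    simp
  have hFle : ∀ x : X, ∀ z ∈ F x, φ z ≤ φ x := by
    intro x z hz
    exact le_trans le_self_add hz.2
  have hFtrans : ∀ (a b c : X), b ∈ F a → c ∈ F b → c ∈ F a := by
    intro a b c hb hc
    refine ⟨hc.1, ?_⟩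
    have h1 : ENNReal.ofReal (κ * dist c a)
        ≤ ENNReal.ofReal (κ * dist c b) + ENNReal.ofReal (κ * dist b a) := by
      rw [← ENNReal.ofReal_add (by positivity) (by positivity)]
      apply ENNReal.ofReal_le_ofReal
      nlinarith [dist_triangle c b a, dist_nonneg (x := c) (y := b), dist_nonneg (x := b) (y := a)]
    calc φ c + ENNReal.ofReal (κ * dist c a)
        ≤ φ c + (ENNReal.ofReal (κ * dist c b) + ENNReal.ofReal (κ * dist b a)) := by gcongr
      _ = (φ c + ENNReal.ofReal (κ * dist c b)) + ENNReal.ofReal (κ * dist b a) := by ring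
      _ ≤ φ b + ENNReal.ofReal (κ * dist b a) := by gcongr; exact hc.2
      _ ≤ φ a := hb.2
  -- the choice step
  have hstep : ∀ (n : ℕ) (p : {x : X // x ∈ A ∧ φ x ≠ ⊤}),
      ∃ q : {x : X // x ∈ A ∧ φ x ≠ ⊤}, q.1 ∈ F p.1 ∧
        φ q.1 ≤ (⨅ z ∈ F p.1, φ z) + (2 : ℝ≥0∞)⁻¹ ^ n := by
    intro n p
    have hne : (⨅ z ∈ F p.1, φ z) ≠ ⊤ :=
      ne_top_of_le_ne_top p.2.2 (iInf₂_le p.1 (hFself p.1 p.2.1))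
    have hlt : (⨅ z ∈ F p.1, φ z) < (⨅ z ∈ F p.1, φ z) + (2 : ℝ≥0∞)⁻¹ ^ n :=
      ENNReal.lt_add_right hne (by simp)
    rw [iInf_lt_iff] at hlt
    obtain ⟨z, hz⟩ := hlt
    rw [iInf_lt_iff] at hz
    obtain ⟨hzF, hz⟩ := hz
    exact ⟨⟨z, hzF.1, ne_top_of_le_ne_top p.2.2 (hFle p.1 z hzF)⟩, hzF, hz.le⟩
  choose! f hf1 hf2 using hstep
  set u : ℕ → {x : X // x ∈ A ∧ φ x ≠ ⊤} :=
    fun n => Nat.rec ⟨x₀, hx₀, hφx₀⟩ (fun n p => f n p) n with hu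
  set v : ℕ → X := fun n => (u n).1 with hv
  have hv0 : v 0 = x₀ := rfl
  have hvmem : ∀ n, v (n + 1) ∈ F (v n) := fun n => hf1 n (u n)
  have hvA : ∀ n, v n ∈ A := fun n => (u n).2.1
  have hvinf : ∀ n, φ (v (n + 1)) ≤ (⨅ z ∈ F (v n), φ z) + (2 : ℝ≥0∞)⁻¹ ^ n :=
    fun n => hf2 n (u n)
  have hchain : ∀ n m, n ≤ m → v m ∈ F (v n) := by
    intro n m hnm
    induction m with
    | zero => simpa [Nat.le_zero.1 hnm] using hFself (v 0) (hvA 0)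
    | succ k ih =>
      rcases Nat.lt_or_ge n (k+1) with h | h
      · exact hFtrans _ _ _ (ih (Nat.lt_succ_iff.1 h)) (hvmem k)
      · have : n = k + 1 := le_antisymm hnm h
        subst this; exact hFself (v (k+1)) (hvA (k+1))
  -- Cauchy
  have hφfin : ∀ n, φ (v n) ≠ ⊤ := fun n => (u n).2.2
  have hsum : ∀ n : ℕ,
      (∑ i ∈ Finset.range n, ENNReal.ofReal (κ * dist (v (i+1)) (v i))) + φ (v n) ≤ φ x₀ := by
    intro n
    induction n with
    | zero => simp [hv0]
    | succ k ih =>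
      calc (∑ i ∈ Finset.range (k+1), ENNReal.ofReal (κ * dist (v (i+1)) (v i))) + φ (v (k+1))
          = (∑ i ∈ Finset.range k, ENNReal.ofReal (κ * dist (v (i+1)) (v i)))
            + (φ (v (k+1)) + ENNReal.ofReal (κ * dist (v (k+1)) (v k))) := by
            rw [Finset.sum_range_succ]; ring
        _ ≤ (∑ i ∈ Finset.range k, ENNReal.ofReal (κ * dist (v (i+1)) (v i))) + φ (v k) := by
            gcongr; exact (hvmem k).2
        _ ≤ φ x₀ := ih
  have htsum : (∑' i, ENNReal.ofReal (κ * dist (v (i+1)) (v i))) ≤ φ x₀ := by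
    rw [ENNReal.tsum_eq_iSup_nat]
    exact iSup_le fun n => le_trans le_self_add (hsum n)
  have hcauchy : CauchySeq v := by
    apply cauchySeq_of_edist_le_of_tsum_ne_top
      (fun i => (ENNReal.ofReal κ)⁻¹ * ENNReal.ofReal (κ * dist (v (i+1)) (v i)))
    · intro n
      rw [edist_dist, ENNReal.ofReal_mul hκ.le, ← mul_assoc,
        ENNReal.inv_mul_cancel (ENNReal.ofReal_pos.2 hκ).ne' ENNReal.ofReal_ne_top, one_mul, dist_comm]
    · rw [ENNReal.tsum_mul_left]
      exact ENNReal.mul_ne_top (by simpa using hκ) (ne_top_of_le_ne_top hφx₀ htsum)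
  obtain ⟨y, hy⟩ := cauchySeq_tendsto_of_complete hcauchy
  have hyA : y ∈ A := hA.mem_of_tendsto hy (Eventually.of_forall hvA)
  -- φ y is finite
  have hφy : φ y ≠ ⊤ := by
    intro htop
    have h1 : ∀ᶠ z in nhds y, φ x₀ < φ z := hlsc y hyA (φ x₀) (htop ▸ hφx₀.lt_top)
    have h2 : ∀ᶠ n in atTop, φ x₀ < φ (v n) := hy.eventually h1
    obtain ⟨n, hn⟩ := h2.exists
    exact absurd (le_trans (hFle _ _ (hchain 0 n (Nat.zero_le n))) (by rw [hv0])) (not_le.2 hn)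
  -- y ∈ F (v n) for all n
  have hyF : ∀ n, y ∈ F (v n) := by
    intro n
    refine ⟨hyA, ?_⟩
    apply ENNReal.le_of_forall_pos_le_add
    intro ε hε _
    have hhalf : (0:ℝ) < ε / 2 := by positivity
    -- eventually facts
    have hev1 : ∀ᶠ m in atTop, φ y ≤ φ (v m) + ENNReal.ofReal (ε / 2) := by
      rcases eq_or_ne (φ y) 0 with h0 | h0
      · exact Eventually.of_forall fun m => by simp [h0]
      · have hc : φ y - ENNReal.ofReal (ε / 2) < φ y :=
          ENNReal.sub_lt_self hφy h0 (by simp [hhalf])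
        filter_upwards [hy.eventually (hlsc y hyA _ hc)] with m hm
        calc φ y ≤ (φ y - ENNReal.ofReal (ε / 2)) + ENNReal.ofReal (ε / 2) := le_tsub_add
          _ ≤ φ (v m) + ENNReal.ofReal (ε / 2) := by gcongr
    have hev2 : ∀ᶠ m in atTop,
        ENNReal.ofReal (κ * dist y (v n))
          ≤ ENNReal.ofReal (κ * dist (v m) (v n)) + ENNReal.ofReal (ε / 2) := by
      have hd : Tendsto (fun m => dist (v m) (v n)) atTop (nhds (dist y (v n))) :=
        hy.dist tendsto_const_nhds
      have hq : (0:ℝ) < (ε / 2) / κ := div_pos hhalf hκ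
      have : ∀ᶠ m in atTop, dist y (v n) - (ε / 2) / κ < dist (v m) (v n) :=
        hd.eventually (eventually_gt_nhds (by linarith))
      filter_upwards [this] with m hm
      rw [← ENNReal.ofReal_add (by positivity) hhalf.le]
      apply ENNReal.ofReal_le_ofReal
      have h2 : κ * ((ε / 2) / κ) = ε / 2 := by field_simp
      have h3 : dist y (v n) < dist (v m) (v n) + (ε / 2) / κ := by linarith
      have h4 := mul_lt_mul_of_pos_left h3 hκ
      rw [mul_add, h2] at h4
      linarith
    obtain ⟨m, hm1, hm2, hmn⟩ := (hev1.and (hev2.and (eventually_ge_atTop n))).exists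
    calc φ y + ENNReal.ofReal (κ * dist y (v n))
        ≤ (φ (v m) + ENNReal.ofReal (ε / 2))
          + (ENNReal.ofReal (κ * dist (v m) (v n)) + ENNReal.ofReal (ε / 2)) := by
          exact add_le_add hm1 hm2
      _ = (φ (v m) + ENNReal.ofReal (κ * dist (v m) (v n)))
          + (ENNReal.ofReal (ε / 2) + ENNReal.ofReal (ε / 2)) := by ring
      _ ≤ φ (v n) + ε := by
          gcongr
          · exact (hchain n m hmn).2
          · rw [← ENNReal.ofReal_add hhalf.le hhalf.le]
            simp [ENNReal.ofReal_coe_nnreal]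
  refine ⟨y, hyA, by simpa [hv0] using (hyF 0).2, ?_⟩
  -- minimality
  intro z hzA hz
  have hzF : ∀ n, z ∈ F (v n) := fun n => hFtrans _ y z (hyF n) ⟨hzA, hz⟩
  have hyz : ∀ n : ℕ, φ y ≤ φ z + (2 : ℝ≥0∞)⁻¹ ^ n := by
    intro n
    calc φ y ≤ φ (v (n+1)) := hFle _ _ (hyF (n+1))
      _ ≤ (⨅ w ∈ F (v n), φ w) + (2 : ℝ≥0∞)⁻¹ ^ n := hvinf n
      _ ≤ φ z + (2 : ℝ≥0∞)⁻¹ ^ n := by gcongr; exact iInf₂_le z (hzF n)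
  have hyz' : φ y ≤ φ z := by
    have : Tendsto (fun n : ℕ => φ z + (2 : ℝ≥0∞)⁻¹ ^ n) atTop (nhds (φ z + 0)) :=
      tendsto_const_nhds.add (ENNReal.tendsto_pow_atTop_nhds_zero_of_lt_one
        (by simp [ENNReal.inv_lt_one]))
    exact ge_of_tendsto' (by simpa using this) hyz
  have hφz : φ z ≠ ⊤ := ne_top_of_le_ne_top hφy (le_trans le_self_add hz)
  by_contra hne
  have hd : dist z y ≠ 0 := fun h => hne (by rwa [dist_eq_zero] at h)
  have hpos : ENNReal.ofReal (κ * dist z y) ≠ 0 := by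
    have : 0 < dist z y := lt_of_le_of_ne dist_nonneg (Ne.symm hd)
    exact (ENNReal.ofReal_pos.2 (mul_pos hκ this)).ne'
  have : φ z < φ z := by
    calc φ z < φ z + ENNReal.ofReal (κ * dist z y) := ENNReal.lt_add_right hφz hpos
      _ ≤ φ y := hz
      _ ≤ φ z := hyz'
  exact absurd this (lt_irrefl _)

private lemma merit_lsc_aux {X Z : Type*} [MetricSpace X] [SeminormedAddCommGroup Z]
    {G : X → Set Z} {C : Set Z} {x : X} (h : LscAt G x) :
    ∀ c < merit G C x, ∀ᶠ u in nhds x, c < merit G C u := by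
  intro c hc
  simp only [merit, lt_iSup_iff] at hc
  obtain ⟨z, hzG, hz⟩ := hc
  have hVopen : IsOpen {w : Z | c < ENNReal.ofReal (Metric.infDist w C)} := by
    have hcont : Continuous fun w : Z => ENNReal.ofReal (Metric.infDist w C) :=
      ENNReal.continuous_ofReal.comp (Metric.continuous_infDist_pt C)
    exact isOpen_Ioi.preimage hcont
  obtain ⟨U, hU, hUin⟩ := h _ hVopen ⟨z, hzG, hz⟩
  filter_upwards [hU] with u hu
  obtain ⟨w, hwG, hw⟩ := hUin u hu
  exact lt_of_lt_of_le hw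
    (le_iSup₂ (f := fun z (_ : z ∈ G u) => ENNReal.ofReal (Metric.infDist z C)) w hwG)

private lemma merit_eq_zero_iff_aux {X Z : Type*} [SeminormedAddCommGroup Z]
    {G : X → Set Z} {C : Set Z} (hCcl : IsClosed C) (hC0 : (0:Z) ∈ C) (x : X) :
    merit G C x = 0 ↔ G x ⊆ C := by
  simp only [merit]
  constructor
  · intro h z hz
    have h1 : ENNReal.ofReal (Metric.infDist z C) ≤ 0 := by
      rw [← h]
      exact le_iSup₂ (f := fun z (_ : z ∈ G x) => ENNReal.ofReal (Metric.infDist z C)) z hz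
    have h2 : Metric.infDist z C = 0 :=
      le_antisymm (by simpa [ENNReal.ofReal_eq_zero] using h1) Metric.infDist_nonneg
    exact (hCcl.mem_iff_infDist_zero ⟨0, hC0⟩).2 h2
  · intro h
    refine le_antisymm (iSup₂_le fun z hz => ?_) zero_le
    simp [Metric.infDist_zero_of_mem (h hz)]

end AuxLemmas

/-- the merit function rescaled by `σ⁻¹` is a local error bound function. -/
theorem statement_2
    {X Z : Type*} [NormedAddCommGroup X] [NormedSpace ℝ X] [CompleteSpace X]
    [NormedAddCommGroup Z] [NormedSpace ℝ Z] [CompleteSpace Z]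
    (S : Set X) (hSne : S.Nonempty) (hScl : IsClosed S)
    (C : Set Z) (hCcl : IsClosed C) (hCconv : Convex ℝ C)
    (hCcone : ∀ t : ℝ, 0 < t → ∀ z ∈ C, t • z ∈ C) (hC0 : (0:Z) ∈ C)
    (hCne0 : C ≠ {0}) (hCneuniv : C ≠ Set.univ)
    (G : X → Set Z) (hG : ∀ x, (G x).Nonempty)
    (xb : X) (hxbS : xb ∈ S) (hxbG : G xb ⊆ C)
    (hlsc : LscAround G xb)
    (σ r : ℝ) (hσ : 0 < σ) (hr : 0 < r)
    (hslope : ∀ x ∈ Metric.closedBall xb r ∩ S, merit G C x ≠ 0 →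
      ENNReal.ofReal σ ≤ strongSlope (merit G C) S x) :
    LocErrBoundFun (fun x => (ENNReal.ofReal σ)⁻¹ * merit G C x)
      (S ∩ {x | G x ⊆ C}) S xb := by
  classical
  obtain ⟨ρ, hρ, hlscB⟩ := hlsc
  have hmz : ∀ x, merit G C x = 0 ↔ G x ⊆ C := fun x => merit_eq_zero_iff_aux hCcl hC0 x
  have hxbR : xb ∈ S ∩ {x | G x ⊆ C} := ⟨hxbS, hxbG⟩
  set R0 : ℝ := min r ρ with hR0
  have hR0pos : 0 < R0 := lt_min hr hρ
  have hσ0 : (0:ℝ≥0∞) < ENNReal.ofReal σ := ENNReal.ofReal_pos.2 hσ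
  refine ⟨R0/4, by positivity, ?_, ?_⟩
  swap
  · intro x hx
    simp [(hmz x).2 hx.2, Metric.infDist_zero_of_mem hx]
  intro x hx
  obtain ⟨hxB, hxS⟩ := hx
  show ENNReal.ofReal (Metric.infDist x (S ∩ {x | G x ⊆ C})) ≤ (ENNReal.ofReal σ)⁻¹ * merit G C x
  have hdx : dist x xb ≤ R0/4 := by simpa [Metric.mem_closedBall] using hxB
  have hinfle : Metric.infDist x (S ∩ {x | G x ⊆ C}) ≤ R0/4 :=
    le_trans (Metric.infDist_le_dist_of_mem hxbR) hdx
  by_cases hν0 : merit G C x = 0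
  · have hxR : x ∈ S ∩ {x | G x ⊆ C} := ⟨hxS, (hmz x).1 hν0⟩
    simp [Metric.infDist_zero_of_mem hxR]
  by_cases hνtop : merit G C x = ⊤
  · rw [hνtop, ENNReal.mul_top (by simpa using hσ0.ne')]
    exact le_top
  set ε := (merit G C x).toReal with hε
  have hεpos : 0 < ε := ENNReal.toReal_pos hν0 hνtop
  have hνx : merit G C x = ENNReal.ofReal ε := (ENNReal.ofReal_toReal hνtop).symm
  have hrhs : (ENNReal.ofReal σ)⁻¹ * merit G C x = ENNReal.ofReal (ε / σ) := by
    rw [hνx, ENNReal.ofReal_div_of_pos hσ, ENNReal.div_eq_inv_mul]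
  rw [hrhs, ENNReal.ofReal_le_ofReal_iff (by positivity)]
  by_contra hcon
  push_neg at hcon
  obtain ⟨lam, hlam1, hlam2⟩ := exists_between hcon
  have hlampos : 0 < lam := lt_trans (by positivity) hlam1
  have hlamlt : lam < R0/4 := lt_of_lt_of_le hlam2 hinfle
  set κ := ε / lam with hκdef
  have hκpos : 0 < κ := div_pos hεpos hlampos
  have hκσ : κ < σ := by
    have h1 : ε < lam * σ := (div_lt_iff₀ hσ).1 hlam1
    rw [hκdef, div_lt_iff₀ hlampos]
    linarith
  set A : Set X := S ∩ Metric.closedBall xb R0 with hA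
  have hAcl : IsClosed A := hScl.inter Metric.isClosed_closedBall
  have hlscA : ∀ y ∈ A, ∀ c < merit G C y, ∀ᶠ z in nhds y, c < merit G C z := by
    intro y hyA c hc
    have hyρ : y ∈ Metric.closedBall xb ρ :=
      Metric.closedBall_subset_closedBall (min_le_right r ρ) hyA.2
    exact merit_lsc_aux (hlscB y hyρ) c hc
  have hxA : x ∈ A :=
    ⟨hxS, Metric.closedBall_subset_closedBall (by linarith) hxB⟩
  obtain ⟨y, hyA, hy1, hymin⟩ := ekeland_aux A hAcl (merit G C) hlscA x hxA hνtop κ hκpos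
  have hdyx : dist y x ≤ lam := by
    have h1 : ENNReal.ofReal (κ * dist y x) ≤ ENNReal.ofReal ε := by
      calc ENNReal.ofReal (κ * dist y x)
          ≤ merit G C y + ENNReal.ofReal (κ * dist y x) := le_add_self
        _ ≤ merit G C x := hy1
        _ = ENNReal.ofReal ε := hνx
    have h2 : κ * dist y x ≤ ε := (ENNReal.ofReal_le_ofReal_iff hεpos.le).1 h1
    have h3 : dist y x ≤ ε / κ := by
      rw [le_div_iff₀ hκpos]; linarith
    have hεκ : ε / κ = lam := by
      rw [hκdef]; field_simp
    linarith
  have hνy0 : merit G C y ≠ 0 := by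
    intro h0
    have hyR : y ∈ S ∩ {x | G x ⊆ C} := ⟨hyA.1, (hmz y).1 h0⟩
    have h1 : Metric.infDist x (S ∩ {x | G x ⊆ C}) ≤ dist x y :=
      Metric.infDist_le_dist_of_mem hyR
    rw [dist_comm] at h1
    linarith
  have hdyxb : dist y xb ≤ R0/2 := by
    calc dist y xb ≤ dist y x + dist x xb := dist_triangle _ _ _
      _ ≤ lam + R0/4 := add_le_add hdyx hdx
      _ ≤ R0/2 := by linarith
  have hyball : y ∈ Metric.closedBall xb r ∩ S := by
    refine ⟨?_, hyA.1⟩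
    simp only [Metric.mem_closedBall]
    have : R0 ≤ r := min_le_left r ρ
    linarith
  have hs := hslope y hyball hνy0
  have hub : strongSlope (merit G C) S y ≤ ENNReal.ofReal κ := by
    unfold strongSlope
    split_ifs with hminl
    · exact zero_le
    · refine le_trans (iInf₂_le (R0/4) (Set.mem_Ioi.2 (by positivity))) ?_
      apply iSup₂_le
      intro z hz
      obtain ⟨⟨hzS, hzB⟩, hzne⟩ := hz
      have hzny : z ≠ y := by simpa using hzne
      have hzA : z ∈ A := by
        refine ⟨hzS, ?_⟩
        have hzy4 : dist z y ≤ R0/4 := by simpa [Metric.mem_closedBall] using hzB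
        simp only [Metric.mem_closedBall]
        calc dist z xb ≤ dist z y + dist y xb := dist_triangle _ _ _
          _ ≤ R0 := by linarith
      have hnle : ¬ (merit G C z + ENNReal.ofReal (κ * dist z y) ≤ merit G C y) :=
        fun hle => hzny (hymin z hzA hle)
      rw [not_le] at hnle
      have hkey : merit G C y - merit G C z ≤ ENNReal.ofReal (κ * dist z y) := by
        rw [tsub_le_iff_right]
        exact hnle.le.trans (le_of_eq (add_comm _ _))
      have hpos : (0:ℝ) < ‖y - z‖ := by
        rw [norm_sub_pos_iff]
        exact fun h => hzny h.symm
      rw [ENNReal.div_le_iff (by simpa [ENNReal.ofReal_eq_zero] using hpos)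
        ENNReal.ofReal_ne_top]
      calc merit G C y - merit G C z ≤ ENNReal.ofReal (κ * dist z y) := hkey
        _ = ENNReal.ofReal κ * ENNReal.ofReal ‖y - z‖ := by
            rw [dist_eq_norm, norm_sub_rev, ENNReal.ofReal_mul hκpos.le]
  have hfin : ENNReal.ofReal σ ≤ ENNReal.ofReal κ := le_trans hs hub
  rw [ENNReal.ofReal_le_ofReal_iff hκpos.le] at hfin
  linarith
end

section
/- Let X, Y, Z be real Banach spaces, K ⊆ Y a convex cone with nonempty interior, S ⊆ X a nonempty closed set, C ⊆ Z a proper closed convex cone with C ≠ {0}, f : X → Y, and G : X ⇉ Z with G(x) ≠ ∅ for all x. Let ν(x) = sup_{z ∈ G(x)} dist(z,C), R = S ∩ {x : G(x) ⊆ C}, and x̄ ∈ R. Suppose that (i) f is K-Lipschitz near x̄ with constant ℓ_f and vector e ∈ int K ∩ B(0,1); (ii) G is lower semicontinuous at every point of some ball around x̄ and there exist σ > 0, r > 0 such that the strong slope of ν relative to S at x is at least σ for every x ∈ B(x̄,r) ∩ S with ν(x) > 0. Then for any ℓ ≥ ℓ_f, if x̄ is a locally weakly efficient solution of minimizing f over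 R, then x̄ is a locally weakly efficient solution of minimizing x ↦ f(x) + ℓσ⁻¹ν(x)e over S: there exists δ > 0 such that there is no x ∈ B(x̄,δ) ∩ S with ν(x) < +∞ and f(x) + ℓσ⁻¹ν(x)e ∈ f(x̄) − int K. -/
open Filter Topology Metric Set Pointwise
open scoped ENNReal NNReal

lemma ekeland_enn {X : Type*} [NormedAddCommGroup X] [CompleteSpace X]
    (A : Set X) (hA : IsClosed A) (ψ : X → ℝ≥0∞)
    (hlsc : ∀ y ∈ A, ∀ c < ψ y, ∀ᶠ u in nhds y, c < ψ u)
    (x₀ : X) (hx₀ : x₀ ∈ A) (hfin : ψ x₀ ≠ ⊤) (σ' : ℝ) (hσ' : 0 < σ') :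
    ∃ y ∈ A, ψ y + ENNReal.ofReal (σ' * ‖y - x₀‖) ≤ ψ x₀ ∧
      ∀ z ∈ A, ψ z + ENNReal.ofReal (σ' * ‖z - y‖) ≤ ψ y → z = y := by
  classical
  set F : X → Set X := fun x => {z | z ∈ A ∧ ψ z + ENNReal.ofReal (σ' * ‖z - x‖) ≤ ψ x}
    with hFdef
  have hself : ∀ x ∈ A, x ∈ F x := by
    intro x hx
    refine ⟨hx, ?_⟩
    simp
  have hFA : ∀ x z, z ∈ F x → z ∈ A ∧ ψ z ≤ ψ x := by
    intro x z hz
    exact ⟨hz.1, le_trans le_self_add hz.2⟩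
  have htrans : ∀ x z w, z ∈ F x → w ∈ F z → w ∈ F x := by
    intro x z w hz hw
    refine ⟨hw.1, ?_⟩
    have h1 : σ' * ‖w - x‖ ≤ σ' * ‖w - z‖ + σ' * ‖z - x‖ := by
      rw [← mul_add]
      have := dist_triangle w z x
      simp only [dist_eq_norm] at this
      nlinarith
    calc ψ w + ENNReal.ofReal (σ' * ‖w - x‖)
        ≤ ψ w + (ENNReal.ofReal (σ' * ‖w - z‖) + ENNReal.ofReal (σ' * ‖z - x‖)) := by
          gcongr
          rw [← ENNReal.ofReal_add (by positivity) (by positivity)]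
          exact ENNReal.ofReal_le_ofReal h1
      _ = (ψ w + ENNReal.ofReal (σ' * ‖w - z‖)) + ENNReal.ofReal (σ' * ‖z - x‖) := by ring
      _ ≤ ψ z + ENNReal.ofReal (σ' * ‖z - x‖) := by gcongr; exact hw.2
      _ ≤ ψ x := hz.2
  -- near-infimum selection
  have key : ∀ (n : ℕ) (x : X), ∃ w, (x ∈ A ∧ ψ x ≠ ⊤) →
      (w ∈ F x ∧ ψ w ≤ (⨅ v ∈ F x, ψ v) + 2⁻¹ ^ n) := by
    intro n x
    by_cases hx : x ∈ A ∧ ψ x ≠ ⊤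
    · have hne : (⨅ v ∈ F x, ψ v) ≠ ⊤ := by
        refine ne_top_of_le_ne_top hx.2 ?_
        exact biInf_le _ (hself x hx.1)
      have hlt : (⨅ v ∈ F x, ψ v) < (⨅ v ∈ F x, ψ v) + 2⁻¹ ^ n := by
        refine ENNReal.lt_add_right hne ?_
        exact pow_ne_zero _ (by norm_num)
      rw [iInf_lt_iff] at hlt
      obtain ⟨v, hv⟩ := hlt
      rw [iInf_lt_iff] at hv
      obtain ⟨hvF, hv⟩ := hv
      exact ⟨v, fun _ => ⟨hvF, hv.le⟩⟩
    · exact ⟨x, fun h => absurd h hx⟩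
  choose g hg using key
  set z : ℕ → X := fun n => n.rec x₀ (fun k zk => g k zk) with hzdef
  have hz0 : z 0 = x₀ := rfl
  have hzs : ∀ n, z (n + 1) = g n (z n) := fun n => rfl
  have hzmem : ∀ n, z n ∈ A ∧ ψ (z n) ≠ ⊤ := by
    intro n
    induction n with
    | zero => exact ⟨hx₀, hfin⟩
    | succ k ih =>
      have h := hg k (z k) ih
      rw [← hzs k] at h
      have := hFA _ _ h.1
      exact ⟨this.1, ne_top_of_le_ne_top ih.2 this.2⟩
  have hF : ∀ n, z (n + 1) ∈ F (z n) := by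
    intro n
    have h := hg n (z n) (hzmem n)
    rw [← hzs n] at h
    exact h.1
  have hnear : ∀ n, ψ (z (n + 1)) ≤ (⨅ v ∈ F (z n), ψ v) + 2⁻¹ ^ n := by
    intro n
    have h := hg n (z n) (hzmem n)
    rw [← hzs n] at h
    exact h.2
  have hchain : ∀ n m, n ≤ m → z m ∈ F (z n) := by
    intro n m hnm
    induction m, hnm using Nat.le_induction with
    | base => exact hself _ (hzmem n).1
    | succ m hm ih => exact htrans _ _ _ ih (hF m)
  set a : ℕ → ℝ := fun n => (ψ (z n)).toReal with hadef
  have ha0 : ∀ n, 0 ≤ a n := fun n => ENNReal.toReal_nonneg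
  have hstepR : ∀ n m, n ≤ m → a m + σ' * ‖z m - z n‖ ≤ a n := by
    intro n m hnm
    have h := (hchain n m hnm).2
    have h2 := ENNReal.toReal_le_toReal (a := ψ (z m) + ENNReal.ofReal (σ' * ‖z m - z n‖))
      (by simp [ENNReal.add_ne_top, (hzmem m).2]) (hzmem n).2 |>.mpr h
    rwa [ENNReal.toReal_add (hzmem m).2 ENNReal.ofReal_ne_top,
      ENNReal.toReal_ofReal (by positivity)] at h2
  have hanti : Antitone a := by
    refine antitone_nat_of_succ_le fun n => ?_
    have := hstepR n (n + 1) (Nat.le_succ n)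
    nlinarith [norm_nonneg (z (n+1) - z n)]
  have hdist : ∀ n, dist (z n) (z (n + 1)) ≤ (a n - a (n + 1)) / σ' := by
    intro n
    have := hstepR n (n + 1) (Nat.le_succ n)
    rw [dist_eq_norm, norm_sub_rev]
    rw [le_div_iff₀ hσ']
    nlinarith
  have hsum : Summable (fun n => dist (z n) (z (n + 1))) := by
    refine summable_of_sum_range_le (c := a 0 / σ') (fun n => dist_nonneg) ?_
    intro n
    calc ∑ i ∈ Finset.range n, dist (z i) (z (i + 1))
        ≤ ∑ i ∈ Finset.range n, (a i - a (i + 1)) / σ' := by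
          exact Finset.sum_le_sum fun i _ => hdist i
      _ = (a 0 - a n) / σ' := by
          rw [← Finset.sum_div, Finset.sum_range_sub' a n]
      _ ≤ a 0 / σ' := by
          apply div_le_div_of_nonneg_right _ hσ'.le
          linarith [ha0 n]
  obtain ⟨y, hy⟩ := cauchySeq_tendsto_of_complete (cauchySeq_of_summable_dist hsum)
  have hyA : y ∈ A := hA.mem_of_tendsto hy (Filter.Eventually.of_forall fun n => (hzmem n).1)
  have hbdd : BddBelow (Set.range a) := ⟨0, by rintro _ ⟨n, rfl⟩; exact ha0 n⟩
  set L : ℝ := ⨅ n, a n with hLdef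
  have hLt : Tendsto a atTop (nhds L) := tendsto_atTop_ciInf hanti hbdd
  have hL0 : 0 ≤ L := le_ciInf ha0
  have hψyL : ψ y ≤ ENNReal.ofReal L := by
    by_contra hlt
    push_neg at hlt
    obtain ⟨c, hc1, hc2⟩ := exists_between hlt
    have hev := hlsc y hyA c hc2
    have hev2 : ∀ᶠ n in atTop, c < ψ (z n) := hy.eventually hev
    have hcne : c ≠ ⊤ := by
      obtain ⟨n, hn⟩ := hev2.exists
      intro hc
      rw [hc] at hn
      exact absurd hn (by simp [lt_irrefl, (hzmem n).2, lt_top_iff_ne_top, not_lt, le_top])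
    have hev3 : ∀ᶠ n in atTop, c.toReal < a n := by
      filter_upwards [hev2] with n hn
      exact ENNReal.toReal_lt_toReal hcne (hzmem n).2 |>.mpr hn
    have : c.toReal ≤ L := ge_of_tendsto hLt (hev3.mono fun n h => h.le)
    have : L < c.toReal := (ENNReal.ofReal_lt_iff_lt_toReal hL0 hcne).mp hc1
    linarith
  have hyF : ∀ n, ψ y + ENNReal.ofReal (σ' * ‖y - z n‖) ≤ ψ (z n) := by
    intro n
    have htend : Tendsto (fun m => a m + σ' * ‖z m - z n‖) atTop
        (nhds (L + σ' * ‖y - z n‖)) := by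
      exact hLt.add (((hy.sub_const (z n)).norm).const_mul σ')
    have hle : L + σ' * ‖y - z n‖ ≤ a n :=
      le_of_tendsto htend (eventually_atTop.2 ⟨n, fun m hm => hstepR n m hm⟩)
    calc ψ y + ENNReal.ofReal (σ' * ‖y - z n‖)
        ≤ ENNReal.ofReal L + ENNReal.ofReal (σ' * ‖y - z n‖) := by gcongr
      _ = ENNReal.ofReal (L + σ' * ‖y - z n‖) := by
          rw [ENNReal.ofReal_add hL0 (by positivity)]
      _ ≤ ENNReal.ofReal (a n) := ENNReal.ofReal_le_ofReal hle
      _ = ψ (z n) := ENNReal.ofReal_toReal (hzmem n).2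
  refine ⟨y, hyA, by simpa [hz0] using hyF 0, ?_⟩
  intro w hwA hw
  have hwy : ψ w ≤ ψ y := le_trans le_self_add hw
  have hyfin : ψ y ≠ ⊤ := ne_top_of_le_ne_top hfin (by simpa [hz0] using le_trans le_self_add (hyF 0))
  have hwfin : ψ w ≠ ⊤ := ne_top_of_le_ne_top hyfin hwy
  have hwFn : ∀ n, w ∈ F (z n) := fun n => htrans _ _ _ ⟨hyA, hyF n⟩ ⟨hwA, hw⟩
  have hkey : ∀ n : ℕ, ψ w + ENNReal.ofReal (σ' * ‖w - y‖) ≤ ψ w + 2⁻¹ ^ n := by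
    intro n
    have h1 : ψ (z (n + 1)) ≤ ψ w + 2⁻¹ ^ n :=
      le_trans (hnear n) (add_le_add (biInf_le _ (hwFn n)) le_rfl)
    have h2 : ψ y ≤ ψ (z (n + 1)) := le_trans le_self_add (hyF (n + 1))
    exact le_trans hw (le_trans h2 h1)
  have hc0 : ENNReal.ofReal (σ' * ‖w - y‖) ≤ 0 := by
    have hpow : Tendsto (fun n : ℕ => (2⁻¹ : ℝ≥0∞) ^ n) atTop (nhds 0) :=
      ENNReal.tendsto_pow_atTop_nhds_zero_of_lt_one (by norm_num)
    refine ge_of_tendsto hpow (Filter.Eventually.of_forall fun n => ?_)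
    exact (ENNReal.add_le_add_iff_left hwfin).mp (hkey n)
  have h1 : σ' * ‖w - y‖ ≤ 0 := by
    have := le_antisymm hc0 zero_le
    rwa [ENNReal.ofReal_eq_zero] at this
  have h2 : ‖w - y‖ ≤ 0 := by nlinarith [norm_nonneg (w - y)]
  have : w - y = 0 := by
    rw [← norm_le_zero_iff]
    exact h2
  exact sub_eq_zero.mp this

lemma le_merit {X Z : Type*} [SeminormedAddCommGroup Z] (G : X → Set Z) (C : Set Z)
    {x : X} {z : Z} (hz : z ∈ G x) :
    ENNReal.ofReal (Metric.infDist z C) ≤ merit G C x :=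
  le_iSup₂ (f := fun z (_ : z ∈ G x) => ENNReal.ofReal (Metric.infDist z C)) z hz

lemma merit_zero_subset {X Z : Type*} [SeminormedAddCommGroup Z] {G : X → Set Z} {C : Set Z}
    (hCcl : IsClosed C) (hC0 : (0:Z) ∈ C) {x : X} (h : merit G C x = 0) : G x ⊆ C := by
  intro z hz
  have h1 := (le_merit G C hz).trans h.le
  rw [le_zero_iff, ENNReal.ofReal_eq_zero] at h1
  have h2 : Metric.infDist z C = 0 := le_antisymm h1 Metric.infDist_nonneg
  exact (hCcl.mem_iff_infDist_zero ⟨0, hC0⟩).mpr h2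

lemma merit_lsc {X Z : Type*} [SeminormedAddCommGroup X] [SeminormedAddCommGroup Z]
    (G : X → Set Z) (C : Set Z) (x : X) (h : LscAt G x) :
    ∀ c < merit G C x, ∀ᶠ u in nhds x, c < merit G C u := by
  intro c hc
  rw [merit, lt_iSup_iff] at hc
  obtain ⟨z, hz⟩ := hc
  rw [lt_iSup_iff] at hz
  obtain ⟨hzx, hzc⟩ := hz
  set V : Set Z := {z' | c < ENNReal.ofReal (Metric.infDist z' C)} with hVdef
  have hVopen : IsOpen V :=
    isOpen_lt continuous_const (ENNReal.continuous_ofReal.comp (continuous_infDist_pt C))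
  obtain ⟨U, hU, hUV⟩ := h V hVopen ⟨z, hzx, hzc⟩
  filter_upwards [hU] with u hu
  obtain ⟨z', hz'G, hz'V⟩ := hUV u hu
  exact lt_of_lt_of_le hz'V (le_merit G C hz'G)

set_option maxHeartbeats 2000000 in
/-- penalization of a vector problem with set-valued inclusion constraints,
weak efficiency case. -/
theorem statement_3
    {X Y Z : Type*} [NormedAddCommGroup X] [NormedSpace ℝ X] [CompleteSpace X]
    [NormedAddCommGroup Y] [NormedSpace ℝ Y] [CompleteSpace Y]
    [NormedAddCommGroup Z] [NormedSpace ℝ Z] [CompleteSpace Z]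
    (K : Set Y) (hKconv : Convex ℝ K)
    (hKcone : ∀ t : ℝ, 0 < t → ∀ y ∈ K, t • y ∈ K) (hKint : (interior K).Nonempty)
    (S : Set X) (hSne : S.Nonempty) (hScl : IsClosed S)
    (C : Set Z) (hCcl : IsClosed C) (hCconv : Convex ℝ C)
    (hCcone : ∀ t : ℝ, 0 < t → ∀ z ∈ C, t • z ∈ C) (hC0 : (0:Z) ∈ C)
    (hCne0 : C ≠ {0}) (hCneuniv : C ≠ Set.univ)
    (f : X → Y) (G : X → Set Z) (hG : ∀ x, (G x).Nonempty)
    (xb : X) (hxbS : xb ∈ S) (hxbG : G xb ⊆ C)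
    (ℓf : ℝ) (hℓf : 0 < ℓf) (e : Y) (he : e ∈ interior K) (hnorme : ‖e‖ ≤ 1)
    (hLip : KLipschitzNearWith f K xb ℓf e)
    (hlsc : LscAround G xb)
    (σ r : ℝ) (hσ : 0 < σ) (hr : 0 < r)
    (hslope : ∀ x ∈ Metric.closedBall xb r ∩ S, merit G C x ≠ 0 →
      ENNReal.ofReal σ ≤ strongSlope (merit G C) S x)
    (ℓ : ℝ) (hℓ : ℓf ≤ ℓ)
    (hweff : LocWeakEffOn f (S ∩ {x | G x ⊆ C}) K xb) :
    ∃ δ > 0, ∀ x ∈ Metric.closedBall xb δ ∩ S, merit G C x ≠ ⊤ →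
      f xb - (f x + (ℓ / σ * (merit G C x).toReal) • e) ∉ interior K := by
    classical
  obtain ⟨δL, hδL, hLipP⟩ := hLip
  obtain ⟨ρ, hρ, hlscP⟩ := hlsc
  obtain ⟨δw, hδw, hweffP⟩ := hweff
  have hℓpos : 0 < ℓ := hℓf.trans_le hℓ
  have heK : e ∈ K := interior_subset he
  -- cone facts
  have hKK : ∀ u ∈ K, ∀ v ∈ K, u + v ∈ K := by
    intro u hu v hv
    have h1 : (1/2 : ℝ) • u + (1/2 : ℝ) • v ∈ K :=
      hKconv hu hv (by norm_num) (by norm_num) (by norm_num)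
    have h2 := hKcone 2 (by norm_num) _ h1
    have h3 : (2:ℝ) • ((1/2 : ℝ) • u + (1/2 : ℝ) • v) = u + v := by
      rw [smul_add, smul_smul, smul_smul]; norm_num
    rwa [h3] at h2
  have hIK : ∀ u ∈ interior K, ∀ v ∈ K, u + v ∈ interior K := by
    intro u hu v hv
    have hopen : IsOpen ((fun w => w + v) '' interior K) :=
      (Homeomorph.addRight v).isOpenMap _ isOpen_interior
    have hsub : (fun w => w + v) '' interior K ⊆ K := by
      rintro _ ⟨w, hw, rfl⟩
      exact hKK w (interior_subset hw) v hv
    exact interior_maximal hsub hopen ⟨u, hu, rfl⟩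
  have hsmulI : ∀ c : ℝ, 0 < c → ∀ u ∈ interior K, c • u ∈ interior K := by
    intro c hc u hu
    have h1 : c • u ∈ c • interior K := Set.smul_mem_smul_set hu
    rw [← interior_smul₀ (ne_of_gt hc)] at h1
    refine interior_mono ?_ h1
    rintro w ⟨w', hw', rfl⟩
    exact hKcone c hc w' hw'
  have h0K : (0:Y) ∉ interior K := by
    have := hweffP xb ⟨⟨hxbS, hxbG⟩, Metric.mem_closedBall_self hδw.le⟩
    simpa using this
  set M : ℝ := min (min ρ r) (min δL δw) with hMdef
  have hM : 0 < M := lt_min (lt_min hρ hr) (lt_min hδL hδw)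
  set δ : ℝ := M / 4 with hδdef
  have hδpos : 0 < δ := by positivity
  refine ⟨δ, hδpos, ?_⟩
  rintro x ⟨hxball, hxS⟩ hfin hmem
  rw [Metric.mem_closedBall, dist_eq_norm] at hxball
  set m : ℝ := (merit G C x).toReal with hmdef
  set t : ℝ := ℓ / σ * m with htdef
  have hm0 : 0 ≤ m := ENNReal.toReal_nonneg
  have hδρ : δ ≤ ρ := by
    have : M ≤ ρ := le_trans (min_le_left _ _) (min_le_left _ _)
    linarith
  have hδr : δ ≤ r := by
    have : M ≤ r := le_trans (min_le_left _ _) (min_le_right _ _)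
    linarith
  have hδL4 : δ ≤ δL := by
    have : M ≤ δL := le_trans (min_le_right _ _) (min_le_left _ _)
    linarith
  have hδw4 : δ ≤ δw := by
    have : M ≤ δw := le_trans (min_le_right _ _) (min_le_right _ _)
    linarith
  have hxL : x ∈ Metric.closedBall xb δL := by
    rw [Metric.mem_closedBall, dist_eq_norm]; linarith
  by_cases hcase : ℓf * ‖x - xb‖ < t
  · -- coefficient too big: automatic contradiction
    have hL1 : f x - f xb + (ℓf * ‖x - xb‖) • e ∈ K :=
      hLipP x hxL xb (Metric.mem_closedBall_self hδL.le)
    have hsum : (f xb - (f x + t • e)) + (f x - f xb + (ℓf * ‖x - xb‖) • e)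
        ∈ interior K := hIK _ hmem _ hL1
    have heq : (f xb - (f x + t • e)) + (f x - f xb + (ℓf * ‖x - xb‖) • e)
        = (ℓf * ‖x - xb‖ - t) • e := by
      rw [sub_smul]; abel
    rw [heq] at hsum
    set s : ℝ := t - ℓf * ‖x - xb‖ with hsdef
    have hs : 0 < s := by simp only [hsdef]; linarith
    have hneg : (-1 : ℝ) • e ∈ interior K := by
      have h2 := hsmulI s⁻¹ (by positivity) _ hsum
      rwa [smul_smul, show s⁻¹ * (ℓf * ‖x - xb‖ - t) = -1 by
        rw [show ℓf * ‖x - xb‖ - t = -s by rw [hsdef]; ring, mul_neg,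
          inv_mul_cancel₀ hs.ne']] at h2
    have h0mem : (0:Y) ∈ interior K := by
      have h3 := hKconv.interior hneg he (by norm_num : (0:ℝ) ≤ 1/2)
        (by norm_num : (0:ℝ) ≤ 1/2) (by norm_num : (1/2:ℝ) + 1/2 = 1)
      have h4 : (1/2:ℝ) • ((-1:ℝ) • e) + (1/2:ℝ) • e = 0 := by
        rw [smul_smul, ← add_smul]; norm_num
      rwa [h4] at h3
    exact h0K h0mem
  · push_neg at hcase
    have hmt : m ≤ σ * ‖x - xb‖ := by
      have h1 : ℓ / σ * m * σ = ℓ * m := by field_simp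
      have h2 : ℓ / σ * m * σ ≤ ℓf * ‖x - xb‖ * σ := by
        apply mul_le_mul_of_nonneg_right hcase hσ.le
      rw [h1] at h2
      nlinarith [norm_nonneg (x - xb)]
    have hmδ : m ≤ σ * δ := le_trans hmt (by nlinarith)
    by_cases hm : merit G C x = 0
    · have hmz : m = 0 := by rw [hmdef, hm]; simp
      have hxR : x ∈ (S ∩ {x | G x ⊆ C}) ∩ Metric.closedBall xb δw :=
        ⟨⟨hxS, merit_zero_subset hCcl hC0 hm⟩, by
          rw [Metric.mem_closedBall, dist_eq_norm]; linarith⟩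
      refine hweffP x hxR ?_
      have : t = 0 := by rw [htdef, hmz, mul_zero]
      simpa [this] using hmem
    · have hmpos : 0 < m := ENNReal.toReal_pos hm hfin
      obtain ⟨η, hη, hball⟩ := Metric.isOpen_iff.mp isOpen_interior _ hmem
      set μ : ℝ := min 1 (η * σ / (2 * ℓf * m + 1)) with hμdef
      have hμ0 : 0 < μ := lt_min one_pos (by positivity)
      have hμ1 : μ ≤ 1 := min_le_left _ _
      set σ' : ℝ := σ / (1 + μ) with hσ'def
      have hσ'0 : 0 < σ' := by positivity
      have hσ'σ : σ' < σ := by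
        rw [hσ'def, div_lt_iff₀ (by linarith)]; nlinarith
      have hσ'2 : σ / 2 ≤ σ' := by
        rw [hσ'def, le_div_iff₀ (by linarith)]; nlinarith
      set ρ' : ℝ := min ρ r with hρ'def
      have hρ'0 : 0 < ρ' := lt_min hρ hr
      have hMρ' : M ≤ ρ' := min_le_left _ _
      set A : Set X := S ∩ Metric.closedBall xb ρ' with hAdef
      have hAcl : IsClosed A := hScl.inter Metric.isClosed_closedBall
      have hlscA : ∀ y ∈ A, ∀ c < merit G C y, ∀ᶠ u in nhds y, c < merit G C u := by
        intro y hy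
        refine merit_lsc G C y (hlscP y ?_)
        exact Metric.closedBall_subset_closedBall (min_le_left _ _) hy.2
      have hxA : x ∈ A := ⟨hxS, by
        rw [Metric.mem_closedBall, dist_eq_norm]
        linarith⟩
      obtain ⟨y, hyA, hyx, hymin⟩ :=
        ekeland_enn A hAcl (merit G C) hlscA x hxA hfin σ' hσ'0
      have hyxd : σ' * ‖y - x‖ ≤ m := by
        have h1 : ENNReal.ofReal (σ' * ‖y - x‖) ≤ merit G C x :=
          le_trans le_add_self hyx
        exact (ENNReal.ofReal_le_iff_le_toReal hfin).mp h1
      have hyx2 : ‖y - x‖ ≤ 2 * δ := by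
        nlinarith [norm_nonneg (y - x)]
      have hyxb : ‖y - xb‖ ≤ 3 * δ := by
        have := norm_sub_le_of_le (le_refl ‖y - x‖) (le_refl ‖x - xb‖)
        have h1 : ‖y - xb‖ ≤ ‖y - x‖ + ‖x - xb‖ := by
          have := dist_triangle y x xb
          simpa [dist_eq_norm] using this
        linarith
      have h3δ : 3 * δ < M := by rw [hδdef]; linarith
      by_cases hy0 : merit G C y = 0
      · -- y feasible: contradiction with local weak efficiency
        have hyR : y ∈ S ∩ {x | G x ⊆ C} := ⟨hyA.1, merit_zero_subset hCcl hC0 hy0⟩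
        have hyδw : y ∈ Metric.closedBall xb δw := by
          rw [Metric.mem_closedBall, dist_eq_norm]
          have : M ≤ δw := le_trans (min_le_right _ _) (min_le_right _ _)
          linarith
        have hyL : y ∈ Metric.closedBall xb δL := by
          rw [Metric.mem_closedBall, dist_eq_norm]
          have : M ≤ δL := le_trans (min_le_right _ _) (min_le_left _ _)
          linarith
        have hL2 : f x - f y + (ℓf * ‖x - y‖) • e ∈ K := hLipP x hxL y hyL
        set s : ℝ := ℓf * ‖x - y‖ - t with hsdef
        have hws : f xb - (f x + t • e) - s • e ∈ interior K := by
          rcases le_or_gt s 0 with hs | hs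
          · rcases eq_or_lt_of_le hs with hs0 | hs0
            · rw [hs0, zero_smul, sub_zero]
              exact hmem
            · have hKe : (-s) • e ∈ K := hKcone (-s) (by linarith) e heK
              have := hIK _ hmem _ hKe
              rwa [show f xb - (f x + t • e) + (-s) • e
                = f xb - (f x + t • e) - s • e by rw [neg_smul]; abel] at this
          · -- 0 < s : s is small
            have hxy : ‖x - y‖ ≤ m / σ' := by
              rw [norm_sub_rev, le_div_iff₀ hσ'0]
              linarith [hyxd]
            have htlb : ℓf / σ * m ≤ t := by
              rw [htdef]
              apply mul_le_mul_of_nonneg_right _ hm0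
              gcongr
            have hsmall : s < η := by
              have h1 : ℓf * ‖x - y‖ ≤ ℓf * (m / σ') :=
                mul_le_mul_of_nonneg_left hxy hℓf.le
              have h2 : ℓf * (m / σ') - ℓf / σ * m = ℓf * m * μ / σ := by
                rw [hσ'def]; field_simp; ring
              have h3 : μ ≤ η * σ / (2 * ℓf * m + 1) := min_le_right _ _
              have h4 : ℓf * m * μ / σ ≤ ℓf * m * (η * σ / (2 * ℓf * m + 1)) / σ := by
                gcongr
              have h5 : ℓf * m * (η * σ / (2 * ℓf * m + 1)) / σ
                  = η * (ℓf * m / (2 * ℓf * m + 1)) := by field_simp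
              have h6 : ℓf * m / (2 * ℓf * m + 1) < 1 := by
                rw [div_lt_one (by positivity)]; nlinarith
              nlinarith [hη]
            apply hball
            rw [Metric.mem_ball, dist_eq_norm]
            have : f xb - (f x + t • e) - s • e - (f xb - (f x + t • e)) = -(s • e) := by abel
            rw [this, norm_neg, norm_smul, Real.norm_eq_abs, abs_of_pos hs]
            nlinarith
        have hfinal : f xb - f y ∈ interior K := by
          have := hIK _ hws _ hL2
          rwa [show f xb - (f x + t • e) - s • e + (f x - f y + (ℓf * ‖x - y‖) • e)
            = f xb - f y by rw [hsdef, sub_smul]; abel] at this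
        exact hweffP y ⟨hyR, hyδw⟩ hfinal
      · -- slope contradiction
        have hyr : y ∈ Metric.closedBall xb r ∩ S := by
          refine ⟨?_, hyA.1⟩
          rw [Metric.mem_closedBall, dist_eq_norm]
          have : M ≤ r := le_trans (min_le_left _ _) (min_le_right _ _)
          linarith
        have hsl := hslope y hyr hy0
        by_cases hloc : ∃ r0 > 0, ∀ z ∈ S ∩ Metric.closedBall y r0,
            merit G C y ≤ merit G C z
        · rw [strongSlope, if_pos hloc] at hsl
          exact absurd (le_antisymm hsl zero_le) (ENNReal.ofReal_pos.2 hσ).ne'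
        · rw [strongSlope, if_neg hloc] at hsl
          set r₀ : ℝ := ρ' - 3 * δ with hr₀def
          have hr₀ : 0 < r₀ := by rw [hr₀def]; linarith
          have hbound : (⨅ rr ∈ Set.Ioi (0:ℝ), ⨆ z ∈ (S ∩ Metric.closedBall y rr) \ {y},
              (merit G C y - merit G C z) / ENNReal.ofReal ‖y - z‖) ≤ ENNReal.ofReal σ' := by
            refine le_trans (biInf_le _ (Set.mem_Ioi.2 hr₀)) ?_
            refine iSup₂_le fun z hz => ?_
            obtain ⟨⟨hzS, hzb⟩, hzny⟩ := hz
            have hzy : z ≠ y := hzny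
            have hzA : z ∈ A := by
              refine ⟨hzS, ?_⟩
              rw [Metric.mem_closedBall, dist_eq_norm]
              rw [Metric.mem_closedBall, dist_eq_norm] at hzb
              have h1 : ‖z - xb‖ ≤ ‖z - y‖ + ‖y - xb‖ := by
                have := dist_triangle z y xb
                simpa [dist_eq_norm] using this
              rw [hr₀def] at hzb
              linarith
            have hmin : ¬ (merit G C z + ENNReal.ofReal (σ' * ‖z - y‖) ≤ merit G C y) :=
              fun h => hzy (hymin z hzA h)
            have hlt := not_le.mp hmin
            have h1 : merit G C y - merit G C z
                ≤ ENNReal.ofReal σ' * ENNReal.ofReal ‖y - z‖ := by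
              rw [tsub_le_iff_right, ← ENNReal.ofReal_mul hσ'0.le, norm_sub_rev y z,
                add_comm]
              exact hlt.le
            exact (ENNReal.div_le_iff_le_mul
              (Or.inl (by simp [norm_sub_eq_zero_iff, sub_eq_zero]
                          ; exact fun h => hzy (by rw [h]))) 
              (Or.inl ENNReal.ofReal_ne_top)).mpr h1
          have hfin2 := le_trans hsl hbound
          rw [ENNReal.ofReal_le_ofReal_iff hσ'0.le] at hfin2
          linarith
end

section
/- Let X, Y, Z be real Banach spaces, K ⊆ Y a convex cone with nonempty interior, S ⊆ X a nonempty closed set, C ⊆ Z a proper closed convex cone with C ≠ {0}, f : X → Y, and G : X ⇉ Z with G(x) ≠ ∅ for all x. Let ν(x) = sup_{z ∈ G(x)} dist(z,C), R = S ∩ {x : G(x) ⊆ C}, and let x̄ ∈ R be a locally weakly efficient solution of minimizing f over R. Suppose that (i) f is K-Lipschitz near x̄ with constant ℓ_f and vector e ∈ int K ∩ B(0,1), and f is directionally differentiable at x̄; (ii) G is lower semicontinuous at every point of some ball around x̄ and is metrically C-increasing around x̄ relative to S; (iii) the Fréchet upper subdifferential ∂̂⁺ν(x̄) is nonempty. Then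 for every α ∈ (1, inc_C(G,S,x̄)), every ℓ ≥ ℓ_f, and every x* ∈ ∂̂⁺ν(x̄), one has f′(x̄; v) + (ℓ/(α−1))⟨x*, v⟩ e ∉ −int K for all v in the feasible direction cone I(S, x̄). -/
open Filter Topology Metric Set Pointwise
open scoped ENNReal NNReal

lemma push_away {Z : Type*} [NormedAddCommGroup Z] [NormedSpace ℝ Z]
    {C : Set Z} (hCconv : Convex ℝ C)
    (hCcone : ∀ t : ℝ, 0 < t → ∀ z ∈ C, t • z ∈ C) (hC0 : (0:Z) ∈ C)
    {w : Z} (hd : 0 < Metric.infDist w C) {s εA : ℝ} (hs : 0 < s) (hε : 0 < εA) :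
    ∃ p : Z, ‖p - w‖ ≤ s ∧ Metric.infDist w C + s - εA ≤ Metric.infDist p C := by
  set d := Metric.infDist w C with hdd
  have hwT : w ∉ Metric.thickening d C := by
    intro hw
    rw [Metric.mem_thickening_iff] at hw
    obtain ⟨z, hz, hzd⟩ := hw
    exact absurd (Metric.infDist_le_dist_of_mem hz) (not_le.2 hzd)
  obtain ⟨ξ, hξ⟩ := geometric_hahn_banach_open_point (hCconv.thickening d)
    Metric.isOpen_thickening hwT
  have hξw : 0 < ξ w := by
    have h0 := hξ 0 (Metric.self_subset_thickening hd C hC0)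
    simpa using h0
  have hξC : ∀ c ∈ C, ξ c ≤ 0 := by
    intro c hc
    by_contra hpos
    push_neg at hpos
    have hkey : ∀ t : ℝ, 0 < t → t * ξ c < ξ w := by
      intro t ht
      have := hξ (t • c) (Metric.self_subset_thickening hd C (hCcone t ht c hc))
      simpa using this
    have h1 := hkey ((ξ w + 1)/ξ c) (by positivity)
    rw [div_mul_cancel₀ _ (ne_of_gt hpos)] at h1
    linarith
  have hball : ∀ b : Z, ‖b‖ < d → ξ b < ξ w := by
    intro b hb
    apply hξ
    rw [Metric.mem_thickening_iff]
    exact ⟨0, hC0, by simpa using hb⟩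
  set εd := min (εA/2) (d/2) with hεd
  have hεdpos : 0 < εd := lt_min (by linarith) (by linarith)
  have hεdle : εd ≤ εA/2 := min_le_left _ _
  set ρ' := d - εd with hρ'
  have hρ'pos : 0 < ρ' := by
    have : εd ≤ d/2 := min_le_right _ _
    simp only [hρ']; linarith
  have hρ'lt : ρ' < d := by simp only [hρ']; linarith
  -- norm bound : ‖ξ‖ ≤ ξ w / ρ'
  have hnorm : ‖ξ‖ ≤ ξ w / ρ' := by
    apply ContinuousLinearMap.opNorm_le_bound _ (by positivity)
    intro x
    rcases eq_or_ne x 0 with rfl | hx0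
    · simp
    have hnx : 0 < ‖x‖ := norm_pos_iff.mpr hx0
    have haux : ∀ y : Z, ‖y‖ = ‖x‖ → ξ y ≤ ξ w / ρ' * ‖x‖ := by
      intro y hy
      have hb : ‖(ρ'/‖x‖) • y‖ < d := by
        rw [norm_smul, Real.norm_eq_abs, abs_of_pos (by positivity), hy]
        rw [div_mul_cancel₀ _ (ne_of_gt hnx)]
        exact hρ'lt
      have h2 := hball _ hb
      rw [map_smul, smul_eq_mul] at h2
      have h3 : ξ y < ξ w / (ρ'/‖x‖) := by
        rw [lt_div_iff₀ (by positivity)]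
        nlinarith
      calc ξ y ≤ ξ w / (ρ'/‖x‖) := le_of_lt h3
        _ = ξ w / ρ' * ‖x‖ := by rw [div_div_eq_mul_div]; ring
          
    rw [Real.norm_eq_abs]
    refine abs_le.mpr ⟨?_, haux x rfl⟩
    have := haux (-x) (by simp)
    simp only [map_neg] at this
    linarith
  have hξpos : 0 < ‖ξ‖ := by
    by_contra hle
    push_neg at hle
    have h0 : ‖ξ‖ = 0 := le_antisymm hle (norm_nonneg _)
    have := ξ.le_opNorm w
    rw [h0, Real.norm_eq_abs] at this
    simp at this
    nlinarith [abs_nonneg (ξ w)]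
  have hwlb : ρ' * ‖ξ‖ ≤ ξ w := by
    rw [mul_comm]
    exact (le_div_iff₀ hρ'pos).mp hnorm
  -- choose u
  set τ := min (1/2 : ℝ) (εA/(2*s)) with hτ
  have hτpos : 0 < τ := lt_min (by norm_num) (by positivity)
  have hτle : τ ≤ εA/(2*s) := min_le_right _ _
  have hr : ‖ξ‖ * (1 - τ) < ‖ξ‖ := by
    nlinarith
  obtain ⟨u, hu1, hu2⟩ := ξ.exists_lt_apply_of_lt_opNorm hr
  set u' := if 0 ≤ ξ u then u else -u with hu'
  have hu'1 : ‖u'‖ ≤ 1 := by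
    simp only [hu']
    split <;> simp [le_of_lt hu1]
  have hu'2 : ‖ξ‖ * (1 - τ) < ξ u' := by
    simp only [hu']
    rw [Real.norm_eq_abs] at hu2
    split_ifs with h
    · rwa [abs_of_nonneg h] at hu2
    · push_neg at h
      rw [map_neg]
      rwa [abs_of_neg h] at hu2
  refine ⟨w + s • u', ?_, ?_⟩
  · rw [add_sub_cancel_left, norm_smul, Real.norm_eq_abs, abs_of_pos hs]
    nlinarith [norm_nonneg u']
  · -- lower bound on infDist
    have hplb : ∀ c ∈ C, ξ (w + s • u') / ‖ξ‖ ≤ dist (w + s • u') c := by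
      intro c hc
      have h1 : ξ (w + s • u') - ξ c ≤ ‖ξ‖ * dist (w + s • u') c := by
        calc ξ (w + s • u') - ξ c = ξ (w + s • u' - c) := by rw [map_sub]
          _ ≤ ‖ξ (w + s • u' - c)‖ := le_abs_self _
          _ ≤ ‖ξ‖ * ‖w + s • u' - c‖ := ξ.le_opNorm _
          _ = ‖ξ‖ * dist (w + s • u') c := by rw [dist_eq_norm]
      have h2 : ξ (w + s • u') ≤ ‖ξ‖ * dist (w + s • u') c := by
        have := hξC c hc; linarith
      rw [div_le_iff₀ hξpos, mul_comm]
      exact h2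
    have hinf : ξ (w + s • u') / ‖ξ‖ ≤ Metric.infDist (w + s • u') C := by
      by_contra hlt
      push_neg at hlt
      obtain ⟨c, hc, hdc⟩ := (Metric.infDist_lt_iff ⟨0, hC0⟩).mp hlt
      exact absurd (hplb c hc) (not_le.2 hdc)
    have hval : ξ (w + s • u') = ξ w + s * ξ u' := by
      rw [map_add, map_smul, smul_eq_mul]
    have hlow : (ρ' + s * (1 - τ)) * ‖ξ‖ ≤ ξ (w + s • u') := by
      rw [hval]
      nlinarith
    have h3 : ρ' + s * (1 - τ) ≤ ξ (w + s • u') / ‖ξ‖ :=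
      (le_div_iff₀ hξpos).mpr hlow
    have h4 : s * τ ≤ εA/2 := by
      have : s * τ ≤ s * (εA/(2*s)) := by nlinarith
      have heq : s * (εA/(2*s)) = εA/2 := by field_simp
      linarith
    have hexp : s * (1 - τ) = s - s * τ := by ring
    have : d + s - εA ≤ ρ' + s * (1 - τ) := by
      rw [hexp, hρ']
      linarith
    linarith

lemma add_mem_of_convex_cone {Y : Type*} [AddCommGroup Y] [Module ℝ Y]
    {K : Set Y} (hconv : Convex ℝ K) (hcone : ∀ t : ℝ, 0 < t → ∀ y ∈ K, t • y ∈ K)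
    {a b : Y} (ha : a ∈ K) (hb : b ∈ K) : a + b ∈ K := by
  have h1 : (1/2 : ℝ) • a + (1/2 : ℝ) • b ∈ K :=
    hconv ha hb (by norm_num) (by norm_num) (by norm_num)
  have h2 := hcone 2 (by norm_num) _ h1
  rw [smul_add, smul_smul, smul_smul] at h2
  norm_num at h2
  exact h2

set_option maxHeartbeats 1000000 in
/-- weak efficiency condition via penalization. -/
theorem statement_6
    {X Y Z : Type*} [NormedAddCommGroup X] [NormedSpace ℝ X] [CompleteSpace X]
    [NormedAddCommGroup Y] [NormedSpace ℝ Y] [CompleteSpace Y]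
    [NormedAddCommGroup Z] [NormedSpace ℝ Z] [CompleteSpace Z]
    (K : Set Y) (hKconv : Convex ℝ K)
    (hKcone : ∀ t : ℝ, 0 < t → ∀ y ∈ K, t • y ∈ K) (hKint : (interior K).Nonempty)
    (S : Set X) (hSne : S.Nonempty) (hScl : IsClosed S)
    (C : Set Z) (hCcl : IsClosed C) (hCconv : Convex ℝ C)
    (hCcone : ∀ t : ℝ, 0 < t → ∀ z ∈ C, t • z ∈ C) (hC0 : (0:Z) ∈ C)
    (hCne0 : C ≠ {0}) (hCneuniv : C ≠ Set.univ)
    (f : X → Y) (G : X → Set Z) (hG : ∀ x, (G x).Nonempty)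
    (xb : X) (hxbS : xb ∈ S) (hxbG : G xb ⊆ C)
    (hweff : LocWeakEffOn f (S ∩ {x | G x ⊆ C}) K xb)
    (ℓf : ℝ) (hℓf : 0 < ℓf) (e : Y) (he : e ∈ interior K) (hnorme : ‖e‖ ≤ 1)
    (hLip : KLipschitzNearWith f K xb ℓf e)
    (f' : X → Y) (hf' : ∀ v, HasDirDerivAt f xb v (f' v))
    (hlsc : LscAround G xb) (hmi : MetIncr G S C xb)
    (hsubne : (FUpperSubdiff (merit G C) xb).Nonempty) :
    ∀ α : ℝ, 1 < α → ENNReal.ofReal α < incrBound G S C xb →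
    ∀ ℓ : ℝ, ℓf ≤ ℓ →
    ∀ q ∈ FUpperSubdiff (merit G C) xb,
    ∀ v ∈ feasDirCone S xb,
      -(f' v + (ℓ / (α - 1) * q v) • e) ∉ interior K := by
  intro α hα1 hαlt ℓ hℓ q hq v hv
  -- merit vanishes at xb
  have merit0 : merit G C xb = 0 := by
    refine le_antisymm ?_ zero_le
    refine iSup₂_le fun z hz => ?_
    rw [Metric.infDist_zero_of_mem (hxbG hz)]
    simp
  have meritR0 : (merit G C xb).toReal = 0 := by rw [merit0]; simp
  -- the subgradient is nonnegative, hence zero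
  have hqnonneg : ∀ w : X, 0 ≤ q w := by
    intro w
    rcases eq_or_ne w 0 with rfl | hw0
    · simp
    by_contra hneg
    push_neg at hneg
    have hnw : 0 < ‖w‖ := norm_pos_iff.mpr hw0
    have hεpos : 0 < -q w / (2 * ‖w‖) := div_pos (by linarith) (by positivity)
    obtain ⟨δ, hδpos, hδ⟩ := hq _ hεpos
    set t : ℝ := δ / (2 * ‖w‖) with htdef
    have ht0 : 0 < t := by positivity
    have hxball : xb + t • w ∈ Metric.ball xb δ := by
      have ht : t * ‖w‖ = δ / 2 := by rw [htdef]; field_simp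
      rw [Metric.mem_ball, dist_eq_norm, add_sub_cancel_left, norm_smul,
        Real.norm_eq_abs, abs_of_pos ht0, ht]
      linarith
    have hxne : xb + t • w ≠ xb := by
      intro h
      have : t • w = 0 := by
        have := congrArg (fun y => y - xb) h
        simpa using this
      exact hw0 (by simpa [smul_eq_zero, ne_of_gt ht0] using this)
    obtain ⟨hfin, hineq⟩ := hδ _ hxball hxne
    rw [meritR0, add_sub_cancel_left, map_smul, smul_eq_mul, norm_smul,
      Real.norm_eq_abs, abs_of_pos ht0] at hineq
    have h0 : 0 ≤ (merit G C (xb + t • w)).toReal := ENNReal.toReal_nonneg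
    have h1 : -(t * q w) ≤ -q w / (2 * ‖w‖) * (t * ‖w‖) := by linarith
    have h2 : t * (-q w) ≤ t * (-q w / 2) := by
      have heq : -q w / (2 * ‖w‖) * (t * ‖w‖) = t * (-q w / 2) := by
        field_simp
      linarith
    have h3 : -q w ≤ -q w / 2 := (mul_le_mul_iff_right₀ ht0).mp h2
    linarith
  have hqv : q v = 0 := by
    have h1 := hqnonneg v
    have h2 := hqnonneg (-v)
    rw [map_neg] at h2
    linarith
  rw [hqv, mul_zero, zero_smul, add_zero]
  intro hmem
  obtain ⟨δw, hδwpos, hweff'⟩ := hweff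
  -- the case v = 0
  rcases eq_or_ne v 0 with rfl | hv0
  · have h0 : f' 0 = 0 := by
      have h1 := hf' 0
      have h2 : Filter.Tendsto (fun t : ℝ => t⁻¹ • (f (xb + t • (0:X)) - f xb))
          (nhdsWithin 0 (Set.Ioi 0)) (nhds 0) := by
        simp only [smul_zero, add_zero, sub_self]
        simpa using tendsto_const_nhds
      exact tendsto_nhds_unique h1 h2
    rw [h0, neg_zero] at hmem
    have := hweff' xb ⟨⟨hxbS, hxbG⟩, by simp [le_of_lt hδwpos]⟩
    rw [sub_self] at this
    exact this hmem
  -- main case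
  obtain ⟨δL, hδLpos, hLip'⟩ := hLip
  obtain ⟨δv, hδvpos, hS'⟩ := hv
  -- extract α' > α with metric increase
  obtain ⟨α', hαα', hα'1, δmi, hδmipos, hmi'⟩ :
      ∃ α' : ℝ, α < α' ∧ 1 < α' ∧ ∃ δmi > 0, MetIncrWith G S C xb α' δmi := by
    rw [incrBound, lt_sSup_iff] at hαlt
    obtain ⟨b, hbmem, hblt⟩ := hαlt
    obtain ⟨α', rfl, hα'1, hδ⟩ := hbmem
    have := (ENNReal.ofReal_lt_ofReal_iff (by linarith)).mp hblt
    exact ⟨α', this, hα'1, hδ⟩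
  -- ball inside K around -(f' v)
  obtain ⟨ρ, hρpos, hρball⟩ : ∃ ρ > 0, Metric.ball (-(f' v)) ρ ⊆ K := by
    rw [mem_interior_iff_mem_nhds] at hmem
    exact Metric.mem_nhds_iff.mp hmem
  have hnv : 0 < ‖v‖ := norm_pos_iff.mpr hv0
  have hα'1' : 0 < α' - 1 := by linarith
  set M : ℝ := ‖v‖ / (α' - 1) + 1 with hMdef
  have hM : 0 < M := by positivity
  set ε : ℝ := ρ / (4 * ℓf * M) with hεdef
  have hεpos : 0 < ε := by positivity
  obtain ⟨δε, hδεpos, hδε⟩ := hq ε hεpos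
  -- directional derivative control
  obtain ⟨δd, hδdpos, hδd⟩ : ∃ δd > 0, ∀ t : ℝ, 0 < t → t < δd →
      ‖t⁻¹ • (f (xb + t • v) - f xb) - f' v‖ < ρ / 2 := by
    obtain ⟨δd, hδdpos, hδd⟩ := (Metric.tendsto_nhdsWithin_nhds.mp (hf' v)) (ρ/2) (by positivity)
    refine ⟨δd, hδdpos, fun t ht0 htδ => ?_⟩
    have h4 : dist t (0:ℝ) < δd := by
      rw [Real.dist_eq, sub_zero, abs_of_pos ht0]; exact htδ
    have := hδd ht0 h4
    rwa [dist_eq_norm] at this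
  set A : ℝ := ‖v‖ + ε * M with hAdef
  have hA : 0 < A := by positivity
  set m : ℝ := min δv (min (δmi/‖v‖) (min (δmi/(ε*M)) (min (δε/‖v‖)
    (min δd (min (δL/A) (δw/A)))))) with hmdef
  have hmpos : 0 < m := by
    refine lt_min hδvpos (lt_min (by positivity) (lt_min (by positivity)
      (lt_min (by positivity) (lt_min hδdpos (lt_min (by positivity) (by positivity))))))
  set t : ℝ := m / 2 with htdef
  have ht0 : 0 < t := by positivity
  have htm : t < m := by rw [htdef]; linarith
  have ht1 : t < δv := htm.trans_le (min_le_left _ _)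
  have ht2 : t < δmi/‖v‖ := htm.trans_le ((min_le_right _ _).trans (min_le_left _ _))
  have ht3 : t < δmi/(ε*M) := htm.trans_le ((min_le_right _ _).trans
    ((min_le_right _ _).trans (min_le_left _ _)))
  have ht4 : t < δε/‖v‖ := htm.trans_le ((min_le_right _ _).trans
    ((min_le_right _ _).trans ((min_le_right _ _).trans (min_le_left _ _))))
  have ht5 : t < δd := htm.trans_le ((min_le_right _ _).trans
    ((min_le_right _ _).trans ((min_le_right _ _).trans
    ((min_le_right _ _).trans (min_le_left _ _)))))
  have ht6 : t < δL/A := htm.trans_le ((min_le_right _ _).trans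
    ((min_le_right _ _).trans ((min_le_right _ _).trans
    ((min_le_right _ _).trans ((min_le_right _ _).trans (min_le_left _ _))))))
  have ht7 : t < δw/A := htm.trans_le ((min_le_right _ _).trans
    ((min_le_right _ _).trans ((min_le_right _ _).trans
    ((min_le_right _ _).trans ((min_le_right _ _).trans (min_le_right _ _))))))
  set xt : X := xb + t • v with hxtdef
  have hxtS : xt ∈ S := hS' t ⟨ht0, ht1⟩
  have hxtxb : ‖xt - xb‖ = t * ‖v‖ := by
    rw [hxtdef, add_sub_cancel_left, norm_smul, Real.norm_eq_abs, abs_of_pos ht0]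
  have hxtne : xt ≠ xb := by
    intro h
    have : t • v = 0 := by
      have := congrArg (fun y => y - xb) h
      simpa [hxtdef] using this
    exact hv0 (by simpa [smul_eq_zero, ne_of_gt ht0] using this)
  -- merit bound at xt
  have hxtball : xt ∈ Metric.ball xb δε := by
    rw [Metric.mem_ball, dist_eq_norm, hxtxb]
    exact (lt_div_iff₀ hnv).mp ht4
  obtain ⟨hfin, hineq⟩ := hδε xt hxtball hxtne
  have hq0 : q (xt - xb) = 0 := by
    rw [hxtdef, add_sub_cancel_left, map_smul, smul_eq_mul, hqv, mul_zero]
  set νt : ℝ := (merit G C xt).toReal with hνtdef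
  have hνt0 : 0 ≤ νt := ENNReal.toReal_nonneg
  have hνt : νt ≤ ε * (t * ‖v‖) := by
    rw [meritR0, hq0, hxtxb] at hineq
    linarith
  set r : ℝ := νt / (α' - 1) + ε * t with hrdef
  have hrpos : 0 < r := by positivity
  have htne : t ≠ 0 := ne_of_gt ht0
  clear_value m t xt νt r
  have hrle : r ≤ ε * t * M := by
    have h1 : νt / (α' - 1) ≤ ε * (t * ‖v‖) / (α' - 1) := by
      gcongr
    have h2 : ε * (t * ‖v‖) / (α' - 1) + ε * t = ε * t * M := by
      rw [hMdef]; field_simp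
    rw [hrdef]; linarith
  have hrδmi : r < δmi := by
    have h1 : t * (ε * M) < δmi := (lt_div_iff₀ (by positivity)).mp ht3
    have h2 : ε * t * M = t * (ε * M) := by ring
    linarith
  have hxtδmi : xt ∈ Metric.closedBall xb δmi ∩ S := by
    refine ⟨?_, hxtS⟩
    rw [Metric.mem_closedBall, dist_eq_norm, hxtxb]
    have h1 : t * ‖v‖ < δmi := (lt_div_iff₀ hnv).mp ht2
    linarith
  obtain ⟨z, hz, hincl⟩ := hmi' xt hxtδmi r ⟨hrpos, hrδmi⟩
  obtain ⟨hzball, hzS⟩ := hz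
  have hzxt : ‖z - xt‖ ≤ r := by
    rw [← dist_eq_norm]; exact hzball
  -- one-step error bound: z is feasible
  have hGz : G z ⊆ C := by
    intro w hw
    by_contra hwC
    have hd0 : 0 < Metric.infDist w C := by
      rcases lt_or_eq_of_le (Metric.infDist_nonneg : 0 ≤ Metric.infDist w C) with h | h
      · exact h
      · exfalso
        apply hwC
        rw [← hCcl.closure_eq]
        exact (Metric.mem_closure_iff_infDist_zero ⟨0, hC0⟩).mpr h.symm
    obtain ⟨p, hpw, hpd⟩ := push_away hCconv hCcone hC0 hd0
      (mul_pos (by linarith : (0:ℝ) < α') hrpos) (by linarith : 0 < Metric.infDist w C / 4)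
    have hp1 : p ∈ enlarge (G z) (α' * r) := by
      show Metric.infDist p (G z) ≤ α' * r
      exact le_trans (Metric.infDist_le_dist_of_mem hw) (by rw [dist_eq_norm]; exact hpw)
    have hp2 : Metric.infDist p (G xt + C) ≤ r := hincl hp1
    have hsum_ne : (G xt + C).Nonempty := (hG xt).add ⟨0, hC0⟩
    obtain ⟨y, hy, hpy⟩ := (Metric.infDist_lt_iff hsum_ne).mp
      (lt_of_le_of_lt hp2 (show r < r + Metric.infDist w C / 4 by linarith))
    obtain ⟨u, hu, c, hc, hyuc⟩ := Set.mem_add.mp hy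
    have hyC : Metric.infDist y C ≤ Metric.infDist u C := by
      have h1 : ∀ c' ∈ C, Metric.infDist y C ≤ dist u c' := by
        intro c' hc'
        have hcc : c' + c ∈ C := add_mem_of_convex_cone hCconv hCcone hc' hc
        calc Metric.infDist y C ≤ dist y (c' + c) := Metric.infDist_le_dist_of_mem hcc
          _ = dist u c' := by
            rw [← hyuc, dist_eq_norm, dist_eq_norm]
            congr 1
            abel
      by_contra hlt
      push_neg at hlt
      obtain ⟨c', hc', hd'⟩ := (Metric.infDist_lt_iff ⟨0, hC0⟩).mp hlt
      exact absurd (h1 c' hc') (not_le.2 hd')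
    have huν : Metric.infDist u C ≤ νt := by
      have h1 : ENNReal.ofReal (Metric.infDist u C) ≤ merit G C xt := by
        exact le_iSup₂ (f := fun z (_ : z ∈ G xt) => ENNReal.ofReal (Metric.infDist z C)) u hu
      rw [hνtdef]
      exact (ENNReal.ofReal_le_iff_le_toReal hfin).mp h1
    have hfinal : Metric.infDist p C ≤ Metric.infDist y C + dist p y :=
      Metric.infDist_le_infDist_add_dist
    have hreq : α' * r - r = νt + (α' - 1) * (ε * t) := by
      rw [hrdef]; field_simp
    have hP : 0 < (α' - 1) * (ε * t) := by positivity
    have hchain : Metric.infDist w C + α' * r - Metric.infDist w C / 4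
        < νt + (r + Metric.infDist w C / 4) := by linarith
    have hfin2 : Metric.infDist w C / 2 < νt - (α' * r - r) := by linarith
    rw [hreq] at hfin2
    linarith
  -- z is close to xb
  have hzxb : dist z xb ≤ t * A := by
    have h1 : dist z xb ≤ dist z xt + dist xt xb := dist_triangle _ _ _
    have h2 : dist xt xb = t * ‖v‖ := by rw [dist_eq_norm, hxtxb]
    have h3 : dist z xt ≤ r := hzball
    have h4 : ε * t * M = t * (ε * M) := by ring
    have h5 : t * (‖v‖ + ε * M) = t * ‖v‖ + t * (ε * M) := by ring
    rw [hAdef, h5]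
    linarith
  have hzδw : z ∈ Metric.closedBall xb δw := by
    rw [Metric.mem_closedBall]
    have h1 : t * A < δw := (lt_div_iff₀ hA).mp ht7
    linarith
  -- Lipschitz estimate
  have hxtL : xt ∈ Metric.closedBall xb δL := by
    rw [Metric.mem_closedBall, dist_eq_norm, hxtxb]
    have h1 : t * A < δL := (lt_div_iff₀ hA).mp ht6
    have h2 : t * ‖v‖ ≤ t * A := by
      have h5 : t * (‖v‖ + ε * M) = t * ‖v‖ + t * (ε * M) := by ring
      have h6 : 0 ≤ t * (ε * M) := mul_nonneg ht0.le (by positivity)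
      rw [hAdef, h5]
      linarith
    linarith
  have hzL : z ∈ Metric.closedBall xb δL := by
    rw [Metric.mem_closedBall]
    have h1 : t * A < δL := (lt_div_iff₀ hA).mp ht6
    linarith
  have hk : f xt - f z + (ℓf * ‖xt - z‖) • e ∈ K := hLip' xt hxtL z hzL
  set k : Y := f xt - f z + (ℓf * ‖xt - z‖) • e with hkdef
  -- directional derivative term
  set wt : Y := t⁻¹ • (f (xb + t • v) - f xb) - f' v with hwtdef
  have hwtnorm : ‖wt‖ < ρ / 2 := hδd t ht0 ht5
  have hfxb : f xb - f xt = t • (-(f' v) - wt) := by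
    have h1 : t • (t⁻¹ • (f (xb + t • v) - f xb)) = f (xb + t • v) - f xb :=
      smul_inv_smul₀ (ne_of_gt ht0) _
    have h2 : -(f' v) - wt = -(t⁻¹ • (f (xb + t • v) - f xb)) := by
      rw [hwtdef]; abel
    rw [h2, smul_neg, h1, hxtdef, neg_sub]
  set b : Y := -wt - ((ℓf * ‖xt - z‖) / t) • e with hbdef
  have hsc : t • (((ℓf * ‖xt - z‖) / t) • e) = (ℓf * ‖xt - z‖) • e := by
    rw [smul_smul]
    congr 1
    field_simp
  have hdecomp : f xb - f z = t • (-(f' v) + b) + k := by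
    rw [hbdef, hkdef]
    rw [show -(f' v) + (-wt - ((ℓf * ‖xt - z‖) / t) • e)
        = (-(f' v) - wt) - ((ℓf * ‖xt - z‖) / t) • e by abel]
    rw [smul_sub, ← hfxb, hsc]
    abel
  -- norm of b
  have hscnorm : (ℓf * ‖xt - z‖) / t ≤ ρ / 4 := by
    have h1 : ‖xt - z‖ ≤ r := by rw [norm_sub_rev]; exact hzxt
    have h2 : ℓf * ‖xt - z‖ ≤ ℓf * (ε * t * M) := mul_le_mul_of_nonneg_left (h1.trans hrle) hℓf.le
    have h3 : (ℓf * ‖xt - z‖) / t ≤ (ℓf * (ε * t * M)) / t := by gcongr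
    have h4 : (ℓf * (ε * t * M)) / t = ℓf * ε * M := by field_simp
    have h5 : ℓf * ε * M = ρ / 4 := by
      rw [hεdef]; field_simp
    linarith
  have hbnorm : ‖b‖ < ρ := by
    have h1 : ‖b‖ ≤ ‖wt‖ + ‖((ℓf * ‖xt - z‖) / t) • e‖ := by
      rw [hbdef]
      calc ‖-wt - ((ℓf * ‖xt - z‖) / t) • e‖
          ≤ ‖-wt‖ + ‖((ℓf * ‖xt - z‖) / t) • e‖ := norm_sub_le _ _
        _ = ‖wt‖ + ‖((ℓf * ‖xt - z‖) / t) • e‖ := by rw [norm_neg]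
    have hscpos : 0 ≤ (ℓf * ‖xt - z‖) / t := div_nonneg (by positivity) ht0.le
    have h2 : ‖((ℓf * ‖xt - z‖) / t) • e‖ ≤ ρ / 4 := by
      rw [norm_smul, Real.norm_eq_abs, abs_of_nonneg hscpos]
      have h3 := mul_le_mul_of_nonneg_left hnorme hscpos
      rw [mul_one] at h3
      linarith [hscnorm]
    linarith
  -- conclude: f xb - f z ∈ interior K, contradicting weak efficiency
  refine hweff' z ⟨⟨hzS, hGz⟩, hzδw⟩ ?_
  rw [hdecomp]
  have hσpos : 0 < t * (ρ - ‖b‖) / 2 := by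
    have h5 : 0 < ρ - ‖b‖ := by linarith [hbnorm]
    exact div_pos (mul_pos ht0 h5) two_pos
  set σ : ℝ := t * (ρ - ‖b‖) / 2 with hσdef
  rw [mem_interior]
  refine ⟨Metric.ball (t • (-(f' v) + b) + k) σ, ?_, Metric.isOpen_ball,
    Metric.mem_ball_self hσpos⟩
  intro y hy
  rw [Metric.mem_ball] at hy
  set a' : Y := (-(f' v) + b) + t⁻¹ • (y - (t • (-(f' v) + b) + k)) with ha'def
  have ha'K : a' ∈ K := by
    apply hρball
    rw [Metric.mem_ball, dist_eq_norm]
    have h1 : a' - (-(f' v)) = b + t⁻¹ • (y - (t • (-(f' v) + b) + k)) := by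
      rw [ha'def]; abel
    rw [h1]
    have h2 : ‖t⁻¹ • (y - (t • (-(f' v) + b) + k))‖ < t⁻¹ * σ := by
      rw [norm_smul, Real.norm_eq_abs, abs_of_pos (inv_pos.mpr ht0)]
      have := hy
      rw [dist_eq_norm] at this
      exact mul_lt_mul_of_pos_left this (inv_pos.mpr ht0)
    have h3 : t⁻¹ * σ = (ρ - ‖b‖) / 2 := by
      rw [hσdef]; field_simp
    calc ‖b + t⁻¹ • (y - (t • (-(f' v) + b) + k))‖
        ≤ ‖b‖ + ‖t⁻¹ • (y - (t • (-(f' v) + b) + k))‖ := norm_add_le _ _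
      _ < ‖b‖ + t⁻¹ * σ := by linarith
      _ = ‖b‖ + (ρ - ‖b‖) / 2 := by rw [h3]
      _ < ρ := by linarith
  have hta' : t • a' = y - k := by
    rw [ha'def, smul_add, smul_inv_smul₀ (ne_of_gt ht0)]
    abel
  have : t • a' + k ∈ K := add_mem_of_convex_cone hKconv hKcone (hKcone t ht0 _ ha'K) hk
  rwa [hta', sub_add_cancel] at this
end

section
/- Let X, Y, Z be real Banach spaces, K ⊆ Y a convex cone with nonempty interior, S ⊆ X a nonempty closed set, C ⊆ Z a proper closed convex cone with C ≠ {0}, f : X → Y, and G : X ⇉ Z with G(x) ≠ ∅ for all x. Let ν(x) = sup_{z ∈ G(x)} dist(z,C), R = S ∩ {x : G(x) ⊆ C}, and let x̄ ∈ R be a locally weakly efficient solution of minimizing f over R. Suppose that: (i) S is locally convex around x̄; (ii) f is K-Lipschitz near x̄ with constant ℓ_f and vector e ∈ int K ∩ B(0,1), and f is directionally differentiable at x̄ with v ↦ f′(x̄;v) K-sublinear on X; (iii) G is lower semicontinuous at every point of some ball around x̄ and metrically C-increasing around x̄ relative to S; (iv) G is C-bounded around x̄ and Hausdorff upper semicontinuous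 at x̄; (v) G is C-concave on X. Then ν is directionally differentiable at x̄, and for every α ∈ (1, inc_C(G,S,x̄)) and ℓ ≥ ℓ_f there exists y* ∈ K⁺ \ {0} such that ⟨y*, f′(x̄;v)⟩ + (ℓ/(α−1)) ν′(x̄;v) ⟨y*, e⟩ ≥ 0 for all v in the feasible direction cone I(S,x̄). -/
open Filter Topology Metric Set Pointwise
open scoped ENNReal NNReal

set_option linter.unusedSectionVars false
set_option maxHeartbeats 1000000

section Aux
variable {Z : Type*} [NormedAddCommGroup Z] [NormedSpace ℝ Z]

/-- lower bound on infDist -/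
lemma aux_le_infDist {C : Set Z} (hC : C.Nonempty) {w : Z} {b : ℝ}
    (h : ∀ c ∈ C, b ≤ dist w c) : b ≤ Metric.infDist w C := by
  by_contra hlt
  push_neg at hlt
  obtain ⟨c, hc, hd⟩ := (Metric.infDist_lt_iff hC).mp hlt
  exact absurd (h c hc) (not_le.mpr hd)

/-- push-out lemma: from a point at positive distance from a convex set, one can move
distance `ρ` and increase the distance by almost `ρ`. -/
lemma aux_pushOut {C : Set Z} (hCconv : Convex ℝ C) (hCne : C.Nonempty) {w : Z}
    (hd : 0 < Metric.infDist w C) {ρ ε : ℝ} (hρ : 0 < ρ) (hε : 0 < ε) :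
    ∃ u : Z, ‖u‖ ≤ ρ ∧ Metric.infDist w C + ρ - ε ≤ Metric.infDist (w + u) C := by
  set d := Metric.infDist w C with hd_def
  set ε1 : ℝ := ε * d / ρ with hε1_def
  have hε1 : 0 < ε1 := by positivity
  obtain ⟨c0, hc0C, hc0⟩ := (Metric.infDist_lt_iff hCne).mp
    (show Metric.infDist w C < d + ε1 by linarith)
  rw [dist_eq_norm] at hc0
  have hwc0 : 0 < ‖w - c0‖ := lt_of_lt_of_le hd (Metric.infDist_le_dist_of_mem hc0C |>.trans_eq (dist_eq_norm _ _))
  set s : ℝ := ρ / ‖w - c0‖ with hs_def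
  have hs : 0 < s := by positivity
  refine ⟨s • (w - c0), ?_, ?_⟩
  · rw [norm_smul, Real.norm_eq_abs, abs_of_pos hs, hs_def]
    rw [div_mul_cancel₀]
    exact hwc0.ne'
  · -- infDist (w + u) C ≥ (1+s) d
    have key : (1 + s) * d ≤ Metric.infDist (w + s • (w - c0)) C := by
      apply aux_le_infDist hCne
      intro c hc
      have hm : (1/(1+s)) • c + (s/(1+s)) • c0 ∈ C := by
        apply hCconv hc hc0C (by positivity) (by positivity)
        field_simp
      have hdist : d ≤ dist w ((1/(1+s)) • c + (s/(1+s)) • c0) :=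
        Metric.infDist_le_dist_of_mem hm
      have heq : w - ((1/(1+s)) • c + (s/(1+s)) • c0)
          = (1/(1+s)) • ((w + s • (w - c0)) - c) := by
        have h1s : (1:ℝ) + s ≠ 0 := by positivity
        rw [smul_sub]
        match_scalars <;> field_simp
      rw [dist_eq_norm, heq, norm_smul, Real.norm_eq_abs, abs_of_pos (by positivity),
        ← dist_eq_norm] at hdist
      have h1s : (0:ℝ) < 1 + s := by positivity
      calc (1+s) * d ≤ (1+s) * ((1/(1+s)) * dist (w + s • (w - c0)) c) := by
            exact mul_le_mul_of_nonneg_left hdist h1s.le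
        _ = dist (w + s • (w - c0)) c := by field_simp
    refine le_trans ?_ key
    -- d + ρ - ε ≤ (1+s) d, i.e. ρ - ε ≤ s*d = ρ d/‖w-c0‖
    have hwc0' : ‖w - c0‖ ≤ d + ε1 := hc0.le
    have h1 : ρ * d / (d + ε1) ≤ s * d := by
      rw [hs_def, div_mul_eq_mul_div]
      gcongr
    have h2 : ρ - ε ≤ ρ * d / (d + ε1) := by
      rw [le_div_iff₀ (by positivity)]
      have expand : (ρ - ε) * (d + ε1) = ρ * d - ε^2 * d / ρ := by
        rw [hε1_def]; field_simp; ring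
      have : (0:ℝ) ≤ ε^2 * d / ρ := by positivity
      linarith
    nlinarith [hd.le]
end Aux

section Aux2
variable {X : Type*} [NormedAddCommGroup X] [NormedSpace ℝ X]
variable {Z : Type*} [NormedAddCommGroup Z] [NormedSpace ℝ Z]

lemma aux_le_merit {G : X → Set Z} {C : Set Z} {x : X} {z : Z} (hz : z ∈ G x) :
    ENNReal.ofReal (Metric.infDist z C) ≤ merit G C x :=
  le_iSup₂_of_le z hz le_rfl

lemma aux_merit_le {G : X → Set Z} {C : Set Z} {x : X} {M : ℝ}
    (h : ∀ z ∈ G x, Metric.infDist z C ≤ M) : merit G C x ≤ ENNReal.ofReal M :=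
  iSup₂_le fun z hz => ENNReal.ofReal_le_ofReal (h z hz)

lemma aux_merit_zero {G : X → Set Z} {C : Set Z} {x : X} (h : G x ⊆ C) : merit G C x = 0 := by
  apply le_antisymm _ zero_le
  apply iSup₂_le
  intro z hz
  simp [Metric.infDist_zero_of_mem (h hz)]

lemma aux_dist_le_mtr {G : X → Set Z} {C : Set Z} {x : X} (hfin : merit G C x ≠ ⊤)
    {z : Z} (hz : z ∈ G x) : Metric.infDist z C ≤ (merit G C x).toReal := by
  have h := aux_le_merit (C := C) hz
  rw [← ENNReal.ofReal_toReal hfin] at h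
  exact (ENNReal.ofReal_le_ofReal_iff ENNReal.toReal_nonneg).mp h

lemma aux_cone_add {C : Set Z} (hconv : Convex ℝ C)
    (hcone : ∀ t : ℝ, 0 < t → ∀ z ∈ C, t • z ∈ C)
    {a b : Z} (ha : a ∈ C) (hb : b ∈ C) : a + b ∈ C := by
  have hmid : (1/2 : ℝ) • a + (1/2 : ℝ) • b ∈ C :=
    hconv ha hb (by norm_num) (by norm_num) (by norm_num)
  have h2 := hcone 2 (by norm_num) _ hmid
  convert h2 using 1
  module

lemma aux_infDist_add_mem {C : Set Z} (hconv : Convex ℝ C)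
    (hcone : ∀ t : ℝ, 0 < t → ∀ z ∈ C, t • z ∈ C) (hCne : C.Nonempty)
    (a : Z) {c : Z} (hc : c ∈ C) :
    Metric.infDist (a + c) C ≤ Metric.infDist a C := by
  apply le_of_forall_pos_le_add
  intro ε hε
  obtain ⟨c1, hc1, hd1⟩ := (Metric.infDist_lt_iff hCne).mp
    (show Metric.infDist a C < Metric.infDist a C + ε by linarith)
  calc Metric.infDist (a + c) C ≤ dist (a + c) (c1 + c) :=
        Metric.infDist_le_dist_of_mem (aux_cone_add hconv hcone hc1 hc)
    _ = dist a c1 := dist_add_right a c1 c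
    _ ≤ Metric.infDist a C + ε := hd1.le

lemma aux_infDist_combo {C : Set Z} (hconv : Convex ℝ C) (hCne : C.Nonempty)
    {s : ℝ} (hs : s ∈ Set.Icc (0:ℝ) 1) (z₁ z₂ : Z) :
    Metric.infDist (s • z₁ + (1-s) • z₂) C
      ≤ s * Metric.infDist z₁ C + (1-s) * Metric.infDist z₂ C := by
  obtain ⟨hs0, hs1⟩ := hs
  apply le_of_forall_pos_le_add
  intro ε hε
  obtain ⟨c1, hc1, hd1⟩ := (Metric.infDist_lt_iff hCne).mp
    (show Metric.infDist z₁ C < Metric.infDist z₁ C + ε by linarith)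
  obtain ⟨c2, hc2, hd2⟩ := (Metric.infDist_lt_iff hCne).mp
    (show Metric.infDist z₂ C < Metric.infDist z₂ C + ε by linarith)
  have hm : s • c1 + (1-s) • c2 ∈ C := hconv hc1 hc2 hs0 (by linarith) (by ring)
  calc Metric.infDist (s • z₁ + (1-s) • z₂) C
      ≤ dist (s • z₁ + (1-s) • z₂) (s • c1 + (1-s) • c2) :=
        Metric.infDist_le_dist_of_mem hm
    _ = ‖s • (z₁ - c1) + (1-s) • (z₂ - c2)‖ := by
        rw [dist_eq_norm]; congr 1; module
    _ ≤ s * ‖z₁ - c1‖ + (1-s) * ‖z₂ - c2‖ := by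
        refine (norm_add_le _ _).trans ?_
        rw [norm_smul, norm_smul, Real.norm_eq_abs, Real.norm_eq_abs,
          abs_of_nonneg hs0, abs_of_nonneg (by linarith : (0:ℝ) ≤ 1 - s)]
    _ ≤ s * (Metric.infDist z₁ C + ε) + (1-s) * (Metric.infDist z₂ C + ε) := by
        rw [← dist_eq_norm, ← dist_eq_norm]
        have h1 : 0 ≤ 1 - s := by linarith
        gcongr
    _ ≤ s * Metric.infDist z₁ C + (1-s) * Metric.infDist z₂ C + ε := by nlinarith

lemma aux_merit_convex {G : X → Set Z} {C : Set Z} (hCconv : Convex ℝ C)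
    (hCcone : ∀ t : ℝ, 0 < t → ∀ z ∈ C, t • z ∈ C) (hCne : C.Nonempty)
    (hconc : ∀ x₁ x₂ : X, ∀ t ∈ Set.Icc (0:ℝ) 1,
      G (t • x₁ + (1 - t) • x₂) ⊆ t • G x₁ + (1 - t) • G x₂ + C)
    (x₁ x₂ : X) {s : ℝ} (hs : s ∈ Set.Icc (0:ℝ) 1) :
    merit G C (s • x₁ + (1 - s) • x₂)
      ≤ ENNReal.ofReal s * merit G C x₁ + ENNReal.ofReal (1-s) * merit G C x₂ := by
  apply iSup₂_le
  intro w hw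
  have hmem := hconc x₁ x₂ s hs hw
  rw [Set.mem_add] at hmem
  obtain ⟨a, ha, c, hc, hw_eq⟩ := hmem
  rw [Set.mem_add] at ha
  obtain ⟨p, hp, q, hq, ha_eq⟩ := ha
  rw [Set.mem_smul_set] at hp hq
  obtain ⟨z₁, hz₁, rfl⟩ := hp
  obtain ⟨z₂, hz₂, rfl⟩ := hq
  subst ha_eq
  subst hw_eq
  have key : Metric.infDist (s • z₁ + (1-s) • z₂ + c) C
      ≤ s * Metric.infDist z₁ C + (1-s) * Metric.infDist z₂ C :=
    (aux_infDist_add_mem hCconv hCcone hCne _ hc).trans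
      (aux_infDist_combo hCconv hCne hs z₁ z₂)
  calc ENNReal.ofReal (Metric.infDist (s • z₁ + (1-s) • z₂ + c) C)
      ≤ ENNReal.ofReal (s * Metric.infDist z₁ C + (1-s) * Metric.infDist z₂ C) :=
        ENNReal.ofReal_le_ofReal key
    _ ≤ ENNReal.ofReal (s * Metric.infDist z₁ C) + ENNReal.ofReal ((1-s) * Metric.infDist z₂ C) :=
        ENNReal.ofReal_add_le
    _ ≤ ENNReal.ofReal s * merit G C x₁ + ENNReal.ofReal (1-s) * merit G C x₂ := by
        rw [ENNReal.ofReal_mul hs.1, ENNReal.ofReal_mul (by linarith [hs.2] : (0:ℝ) ≤ 1 - s)]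
        exact add_le_add (mul_le_mul_right (aux_le_merit hz₁) _)
          (mul_le_mul_right (aux_le_merit hz₂) _)

end Aux2

set_option linter.unusedSectionVars false

section Aux3
variable {X : Type*} [NormedAddCommGroup X] [NormedSpace ℝ X]
variable {Z : Type*} [NormedAddCommGroup Z] [NormedSpace ℝ Z]


lemma aux_error_bound {G : X → Set Z} {S : Set X} {C : Set Z}
    (hCcl : IsClosed C) (hCconv : Convex ℝ C)
    (hCcone : ∀ t : ℝ, 0 < t → ∀ z ∈ C, t • z ∈ C) (hC0 : (0:Z) ∈ C)
    (hG : ∀ x, (G x).Nonempty)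
    {xb : X} {α δ : ℝ} (hα : 1 < α) (hMI : MetIncrWith G S C xb α δ)
    {x : X} (hx : x ∈ Metric.closedBall xb δ ∩ S) (hfin : merit G C x ≠ ⊤)
    (hsmall : (merit G C x).toReal < (α-1) * δ) :
    ∃ z ∈ Metric.closedBall x ((merit G C x).toReal / (α-1)) ∩ S, G z ⊆ C := by
  have hCne : C.Nonempty := ⟨0, hC0⟩
  set m := (merit G C x).toReal with hm_def
  have hm0 : 0 ≤ m := ENNReal.toReal_nonneg
  rcases eq_or_lt_of_le hm0 with hm | hm
  · -- m = 0 : x itself works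
    refine ⟨x, ⟨Metric.mem_closedBall_self (div_nonneg hm0 (by linarith)), hx.2⟩, ?_⟩
    intro w hw
    have h1 : Metric.infDist w C ≤ 0 := (aux_dist_le_mtr hfin hw).trans (le_of_eq hm.symm)
    exact (hCcl.mem_iff_infDist_zero hCne).mpr (le_antisymm h1 Metric.infDist_nonneg)
  · -- m > 0
    set r := m / (α - 1) with hr_def
    have hα1 : (0:ℝ) < α - 1 := by linarith
    have hr : r ∈ Set.Ioo (0:ℝ) δ := by
      constructor
      · positivity
      · rw [hr_def, div_lt_iff₀ hα1]; linarith
    obtain ⟨z, hz, hsub⟩ := hMI x hx r hr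
    refine ⟨z, hz, ?_⟩
    intro w hw
    by_contra hwC
    have hd : 0 < Metric.infDist w C := (hCcl.notMem_iff_infDist_pos hCne).mp hwC
    set d := Metric.infDist w C with hd_def
    have hkey : ∀ ε > 0, d + α * r ≤ r + m + 3 * ε := by
      intro ε hε
      obtain ⟨u, hu, hpush⟩ := aux_pushOut hCconv hCne hd (by positivity : (0:ℝ) < α * r) hε
      have h1 : w + u ∈ enlarge (G z) (α * r) := by
        show Metric.infDist (w + u) (G z) ≤ α * r
        have : Metric.infDist (w + u) (G z) ≤ dist (w + u) w :=
          Metric.infDist_le_dist_of_mem hw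
        simpa [dist_eq_norm] using this.trans (by simpa [dist_eq_norm] using hu)
      have h2 : Metric.infDist (w + u) (G x + C) ≤ r := hsub h1
      have hGCne : (G x + C).Nonempty := (hG x).add hCne
      obtain ⟨p, hp, hdp⟩ := (Metric.infDist_lt_iff hGCne).mp
        (lt_of_le_of_lt h2 (by linarith : r < r + ε))
      rw [Set.mem_add] at hp
      obtain ⟨g, hg, c, hc, rfl⟩ := hp
      have hgC : Metric.infDist g C ≤ m := aux_dist_le_mtr hfin hg
      obtain ⟨c', hc', hdc'⟩ := (Metric.infDist_lt_iff hCne).mp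
        (lt_of_le_of_lt hgC (by linarith : m < m + ε))
      have hup : Metric.infDist (w + u) C ≤ (r + ε) + (m + ε) := by
        calc Metric.infDist (w + u) C ≤ dist (w + u) (c' + c) :=
              Metric.infDist_le_dist_of_mem (aux_cone_add hCconv hCcone hc' hc)
          _ ≤ dist (w + u) (g + c) + dist (g + c) (c' + c) := dist_triangle _ _ _
          _ ≤ (r + ε) + (m + ε) := by
              rw [dist_add_right]
              exact add_le_add hdp.le hdc'.le
      linarith
    have hfin2 : d + α * r ≤ r + m := by
      apply le_of_forall_pos_le_add
      intro ε hε
      have := hkey (ε/3) (by linarith)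
      linarith
    have hrm : (α - 1) * r = m := by
      rw [hr_def]; field_simp
    linarith
end Aux3

/-- weak efficiency condition via penalization under convexity. -/
theorem statement_7
    {X Y Z : Type*} [NormedAddCommGroup X] [NormedSpace ℝ X] [CompleteSpace X]
    [NormedAddCommGroup Y] [NormedSpace ℝ Y] [CompleteSpace Y]
    [NormedAddCommGroup Z] [NormedSpace ℝ Z] [CompleteSpace Z]
    (K : Set Y) (hKconv : Convex ℝ K)
    (hKcone : ∀ t : ℝ, 0 < t → ∀ y ∈ K, t • y ∈ K) (hKint : (interior K).Nonempty)
    (S : Set X) (hSne : S.Nonempty) (hScl : IsClosed S)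
    (C : Set Z) (hCcl : IsClosed C) (hCconv : Convex ℝ C)
    (hCcone : ∀ t : ℝ, 0 < t → ∀ z ∈ C, t • z ∈ C) (hC0 : (0:Z) ∈ C)
    (hCne0 : C ≠ {0}) (hCneuniv : C ≠ Set.univ)
    (f : X → Y) (G : X → Set Z) (hG : ∀ x, (G x).Nonempty)
    (xb : X) (hxbS : xb ∈ S) (hxbG : G xb ⊆ C)
    (hweff : LocWeakEffOn f (S ∩ {x | G x ⊆ C}) K xb)
    -- (i) S locally convex around xb
    (hSconv : ∃ r > 0, Convex ℝ (S ∩ Metric.closedBall xb r))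
    -- (ii) f K-Lipschitz near xb, directionally differentiable with K-sublinear derivative
    (ℓf : ℝ) (hℓf : 0 < ℓf) (e : Y) (he : e ∈ interior K) (hnorme : ‖e‖ ≤ 1)
    (hLip : KLipschitzNearWith f K xb ℓf e)
    (f' : X → Y) (hf' : ∀ v, HasDirDerivAt f xb v (f' v))
    (hph : ∀ t : ℝ, 0 < t → ∀ v, f' (t • v) = t • f' v)
    (hepi : Convex ℝ {p : X × Y | p.2 - f' p.1 ∈ K})
    -- (iii) G l.s.c. and metrically C-increasing
    (hlsc : LscAround G xb) (hmi : MetIncr G S C xb)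
    -- (iv) G C-bounded around xb and Hausdorff u.s.c. at xb
    (hCbd : ∃ δ > 0, ∀ x ∈ Metric.closedBall xb δ, Bornology.IsBounded (G x \ C))
    (husc : ∀ ε > 0, ∃ δ > 0, ∀ x ∈ Metric.closedBall xb δ, ∀ z ∈ G x,
      Metric.infDist z (G xb) ≤ ε)
    -- (v) G C-concave on X
    (hconc : ∀ x₁ x₂ : X, ∀ t ∈ Set.Icc (0:ℝ) 1,
      G (t • x₁ + (1 - t) • x₂) ⊆ t • G x₁ + (1 - t) • G x₂ + C) :
    ∃ ν' : X → ℝ,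
      (∀ v : X, (∀ᶠ t in nhdsWithin (0:ℝ) (Set.Ioi 0), merit G C (xb + t • v) ≠ ⊤) ∧
        Filter.Tendsto
          (fun t : ℝ => ((merit G C (xb + t • v)).toReal - (merit G C xb).toReal) / t)
          (nhdsWithin (0:ℝ) (Set.Ioi 0)) (nhds (ν' v))) ∧
      ∀ α : ℝ, 1 < α → ENNReal.ofReal α < incrBound G S C xb →
      ∀ ℓ : ℝ, ℓf ≤ ℓ →
      ∃ q : Y →L[ℝ] ℝ, q ≠ 0 ∧ (∀ y ∈ K, 0 ≤ q y) ∧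
        ∀ v ∈ feasDirCone S xb, 0 ≤ q (f' v) + ℓ / (α - 1) * ν' v * q e := by
  classical
  obtain ⟨δbd, hδbd, hbd⟩ := hCbd
  have hCne : C.Nonempty := ⟨0, hC0⟩
  -- K facts
  have hKadd : ∀ a ∈ K, ∀ b ∈ K, a + b ∈ K := fun a ha b hb => aux_cone_add hKconv hKcone ha hb
  have hIntAdd : ∀ a ∈ interior K, ∀ b ∈ K, a + b ∈ interior K := by
    intro a ha b hb
    obtain ⟨ε, hε, hball⟩ := Metric.mem_nhds_iff.mp (mem_interior_iff_mem_nhds.mp ha)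
    apply mem_interior.mpr ⟨Metric.ball (a + b) ε, ?_, Metric.isOpen_ball, Metric.mem_ball_self hε⟩
    intro y hy
    have h1 : y - b ∈ Metric.ball a ε := by
      rw [Metric.mem_ball, dist_eq_norm] at hy ⊢
      convert hy using 2
      abel
    have := hKadd _ (hball h1) _ hb
    simpa using this
  have hIntSmul : ∀ t : ℝ, 0 < t → ∀ a ∈ interior K, t • a ∈ interior K := by
    intro t ht a ha
    obtain ⟨ε, hε, hball⟩ := Metric.mem_nhds_iff.mp (mem_interior_iff_mem_nhds.mp ha)
    apply mem_interior.mpr ⟨Metric.ball (t • a) (t * ε), ?_, Metric.isOpen_ball, Metric.mem_ball_self (by positivity)⟩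
    intro y hy
    have h1 : t⁻¹ • y ∈ Metric.ball a ε := by
      rw [Metric.mem_ball, dist_eq_norm] at hy ⊢
      have heq : t⁻¹ • y - a = t⁻¹ • (y - t • a) := by
        rw [smul_sub, smul_smul, inv_mul_cancel₀ ht.ne', one_smul]
      rw [heq, norm_smul, Real.norm_eq_abs, abs_of_pos (by positivity)]
      calc t⁻¹ * ‖y - t • a‖ < t⁻¹ * (t * ε) := by gcongr
        _ = ε := by field_simp
    have := hKcone t ht _ (hball h1)
    rwa [smul_smul, mul_inv_cancel₀ ht.ne', one_smul] at this
  have hKe : e ∈ K := interior_subset he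
  have hIntAddNN : ∀ a ∈ interior K, ∀ lam : ℝ, 0 ≤ lam → a + lam • e ∈ interior K := by
    intro a ha lam hlam
    rcases eq_or_lt_of_le hlam with h | h
    · simp [← h, ha]
    · exact hIntAdd a ha _ (hKcone lam h e hKe)
  -- merit facts
  have hmer0 : merit G C xb = 0 := aux_merit_zero hxbG
  have hfin : ∀ x ∈ Metric.closedBall xb δbd, merit G C x ≠ ⊤ := by
    intro x hx
    obtain ⟨Mr, hMr⟩ := (hbd x hx).subset_closedBall 0
    have hle : merit G C x ≤ ENNReal.ofReal (max Mr 0) := by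
      apply aux_merit_le
      intro z hz
      by_cases hzC : z ∈ C
      · simp [Metric.infDist_zero_of_mem hzC, le_max_right]
      · have hz' : z ∈ Metric.closedBall 0 Mr := hMr ⟨hz, hzC⟩
        calc Metric.infDist z C ≤ dist z 0 := Metric.infDist_le_dist_of_mem hC0
          _ ≤ Mr := by simpa using hz'
          _ ≤ max Mr 0 := le_max_left _ _
    exact ne_top_of_le_ne_top ENNReal.ofReal_ne_top hle
  have hνsmall : ∀ ε > 0, ∃ δ > 0, ∀ x ∈ Metric.closedBall xb δ, merit G C x ≤ ENNReal.ofReal ε := by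
    intro ε hε
    obtain ⟨δ, hδ, h⟩ := husc ε hε
    exact ⟨δ, hδ, fun x hx => aux_merit_le fun z hz =>
      (Metric.infDist_le_infDist_of_subset hxbG (hG xb)).trans (h x hx z hz)⟩
  -- difference quotients
  set mtr : X → ℝ := fun x => (merit G C x).toReal with hmtr_def
  set Q : X → ℝ → ℝ := fun v t => mtr (xb + t • v) / t with hQ_def
  set T : X → ℝ := fun v => δbd / (‖v‖ + 1) with hT_def
  have hTpos : ∀ v, 0 < T v := fun v => by rw [hT_def]; positivity
  have hball : ∀ (v : X) (t : ℝ), 0 < t → t < T v → xb + t • v ∈ Metric.closedBall xb δbd := by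
    intro v t ht htT
    rw [Metric.mem_closedBall, dist_eq_norm]
    have h1 : ‖xb + t • v - xb‖ = t * ‖v‖ := by
      rw [add_sub_cancel_left, norm_smul, Real.norm_eq_abs, abs_of_pos ht]
    rw [h1]
    rw [hT_def, lt_div_iff₀ (by positivity)] at htT
    nlinarith [norm_nonneg v]
  have hQnonneg : ∀ (v : X) (t : ℝ), 0 < t → 0 ≤ Q v t := fun v t ht => by
    rw [hQ_def]; exact div_nonneg ENNReal.toReal_nonneg ht.le
  set ν' : X → ℝ := fun v => sInf (Q v '' Set.Ioo 0 (T v)) with hν'_def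
  have hNe : ∀ v : X, (Q v '' Set.Ioo 0 (T v)).Nonempty :=
    fun v => (Set.nonempty_Ioo.mpr (hTpos v)).image _
  have hBdd : ∀ v : X, BddBelow (Q v '' Set.Ioo 0 (T v)) := by
    intro v
    refine ⟨0, ?_⟩
    rintro y ⟨t, ht, rfl⟩
    exact hQnonneg v t ht.1
  have hν'nonneg : ∀ v, 0 ≤ ν' v := by
    intro v
    rw [hν'_def]
    apply le_csInf (hNe v)
    rintro y ⟨t, ht, rfl⟩
    exact hQnonneg v t ht.1
  have hmono : ∀ (v : X) (s t : ℝ), 0 < s → s ≤ t → t < T v → Q v s ≤ Q v t := by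
    intro v s t hs hst htT
    have ht : 0 < t := lt_of_lt_of_le hs hst
    have hfin_t : merit G C (xb + t • v) ≠ ⊤ := hfin _ (hball v t ht htT)
    have hst1 : s / t ≤ 1 := by rw [div_le_one ht]; exact hst
    have hconv := aux_merit_convex hCconv hCcone hCne hconc (xb + t • v) xb
      (s := s / t) ⟨by positivity, hst1⟩
    have halg : (s / t) • (xb + t • v) + (1 - s / t) • xb = xb + s • v := by
      match_scalars <;> field_simp <;> ring
    rw [halg, hmer0, mul_zero, add_zero] at hconv
    have hkey : mtr (xb + s • v) ≤ (s / t) * mtr (xb + t • v) := by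
      have h2 := ENNReal.toReal_mono (by
        exact ENNReal.mul_ne_top ENNReal.ofReal_ne_top hfin_t) hconv
      rwa [ENNReal.toReal_mul, ENNReal.toReal_ofReal (by positivity)] at h2
    rw [hQ_def]
    rw [div_le_div_iff₀ hs ht]
    calc mtr (xb + s • v) * t ≤ ((s / t) * mtr (xb + t • v)) * t :=
          mul_le_mul_of_nonneg_right hkey ht.le
      _ = mtr (xb + t • v) * s := by field_simp
  have htend : ∀ v : X, Tendsto (Q v) (nhdsWithin 0 (Set.Ioi 0)) (nhds (ν' v)) := by
    intro v
    rw [Metric.tendsto_nhdsWithin_nhds]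
    intro ε hε
    obtain ⟨y, ⟨t0, ht0, rfl⟩, hy⟩ := exists_lt_of_csInf_lt (hNe v)
      (show ν' v < ν' v + ε by linarith)
    refine ⟨t0, ht0.1, ?_⟩
    intro t htIoi hdist
    have ht : 0 < t := htIoi
    have htt0 : t < t0 := by
      rw [Real.dist_eq, sub_zero, abs_of_pos ht] at hdist; exact hdist
    have h1 : Q v t ≤ Q v t0 := hmono v t t0 ht htt0.le ht0.2
    have h2 : ν' v ≤ Q v t := by
      rw [hν'_def]
      exact csInf_le (hBdd v) ⟨t, ⟨ht, htt0.trans ht0.2⟩, rfl⟩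
    rw [Real.dist_eq, abs_lt]
    constructor <;> linarith
  have hν'conv : ∀ v₁ v₂ : X, ∀ s : ℝ, 0 ≤ s → s ≤ 1 →
      ν' (s • v₁ + (1 - s) • v₂) ≤ s * ν' v₁ + (1 - s) * ν' v₂ := by
    intro v₁ v₂ s hs0 hs1
    have hRHS : Tendsto (fun t => s * Q v₁ t + (1 - s) * Q v₂ t) (nhdsWithin 0 (Set.Ioi 0))
        (nhds (s * ν' v₁ + (1 - s) * ν' v₂)) :=
      ((htend v₁).const_mul s).add ((htend v₂).const_mul (1 - s))
    refine le_of_tendsto_of_tendsto (htend _) hRHS ?_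
    have hmem : Set.Ioo (0:ℝ) (min (T v₁) (T v₂)) ∈ nhdsWithin (0:ℝ) (Set.Ioi 0) :=
      Ioo_mem_nhdsGT_of_mem (Set.left_mem_Ico.mpr (lt_min (hTpos v₁) (hTpos v₂)))
    filter_upwards [hmem] with t ht
    have ht0 : 0 < t := ht.1
    have hf1 : merit G C (xb + t • v₁) ≠ ⊤ := hfin _ (hball v₁ t ht0 (ht.2.trans_le (min_le_left _ _)))
    have hf2 : merit G C (xb + t • v₂) ≠ ⊤ := hfin _ (hball v₂ t ht0 (ht.2.trans_le (min_le_right _ _)))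
    have hconv := aux_merit_convex hCconv hCcone hCne hconc (xb + t • v₁) (xb + t • v₂)
      (s := s) ⟨hs0, hs1⟩
    have halg : s • (xb + t • v₁) + (1 - s) • (xb + t • v₂) = xb + t • (s • v₁ + (1 - s) • v₂) := by
      match_scalars <;> ring
    rw [halg] at hconv
    have hkey : mtr (xb + t • (s • v₁ + (1 - s) • v₂))
        ≤ s * mtr (xb + t • v₁) + (1 - s) * mtr (xb + t • v₂) := by
      have hne : ENNReal.ofReal s * merit G C (xb + t • v₁)
          + ENNReal.ofReal (1 - s) * merit G C (xb + t • v₂) ≠ ⊤ :=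
        ENNReal.add_ne_top.mpr ⟨ENNReal.mul_ne_top ENNReal.ofReal_ne_top hf1,
          ENNReal.mul_ne_top ENNReal.ofReal_ne_top hf2⟩
      have h2 := ENNReal.toReal_mono hne hconv
      rwa [ENNReal.toReal_add (ENNReal.mul_ne_top ENNReal.ofReal_ne_top hf1)
        (ENNReal.mul_ne_top ENNReal.ofReal_ne_top hf2), ENNReal.toReal_mul, ENNReal.toReal_mul,
        ENNReal.toReal_ofReal hs0, ENNReal.toReal_ofReal (by linarith)] at h2
    show mtr (xb + t • (s • v₁ + (1 - s) • v₂)) / t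
        ≤ s * (mtr (xb + t • v₁) / t) + (1 - s) * (mtr (xb + t • v₂) / t)
    calc mtr (xb + t • (s • v₁ + (1 - s) • v₂)) / t
        ≤ (s * mtr (xb + t • v₁) + (1 - s) * mtr (xb + t • v₂)) / t := by gcongr
      _ = s * (mtr (xb + t • v₁) / t) + (1 - s) * (mtr (xb + t • v₂) / t) := by ring
  -- feasible directions
  have h0D : (0:X) ∈ feasDirCone S xb := ⟨1, one_pos, fun t _ => by simpa using hxbS⟩
  have hf'0 : f' 0 = 0 := by
    have h := hph 2 two_pos 0
    rw [smul_zero] at h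
    have h3 : f' 0 - (2:ℝ) • f' 0 = -(f' 0) := by module
    rw [sub_eq_zero_of_eq h] at h3
    exact (neg_eq_zero.mp h3.symm)
  have hν'0 : ν' 0 = 0 := by
    refine le_antisymm ?_ (hν'nonneg 0)
    have h1 : ν' 0 ≤ Q 0 (T 0 / 2) := by
      rw [hν'_def]
      exact csInf_le (hBdd 0) ⟨T 0 / 2, ⟨half_pos (hTpos 0), half_lt_self (hTpos 0)⟩, rfl⟩
    have h2 : Q 0 (T 0 / 2) = 0 := by
      rw [hQ_def]
      simp [hmtr_def, hmer0]
    linarith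
  have hDcomb : ∀ v₁ ∈ feasDirCone S xb, ∀ v₂ ∈ feasDirCone S xb, ∀ a b : ℝ,
      0 ≤ a → 0 ≤ b → a + b = 1 → a • v₁ + b • v₂ ∈ feasDirCone S xb := by
    obtain ⟨rS, hrS, hSc⟩ := hSconv
    rintro v₁ ⟨δ₁, hδ₁, h₁⟩ v₂ ⟨δ₂, hδ₂, h₂⟩ a b ha hb hab
    refine ⟨min δ₁ (min δ₂ (rS / (max ‖v₁‖ ‖v₂‖ + 1))), by positivity, ?_⟩
    rintro t ⟨ht0, htlt⟩
    have hnorm : ∀ u : X, ‖u‖ ≤ max ‖v₁‖ ‖v₂‖ → xb + t • u ∈ Metric.closedBall xb rS := by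
      intro u hu
      rw [Metric.mem_closedBall, dist_eq_norm, add_sub_cancel_left, norm_smul,
        Real.norm_eq_abs, abs_of_pos ht0]
      have hm : t < rS / (max ‖v₁‖ ‖v₂‖ + 1) :=
        htlt.trans_le ((min_le_right _ _).trans (min_le_right _ _))
      rw [lt_div_iff₀ (by positivity)] at hm
      nlinarith [norm_nonneg u, le_max_left ‖v₁‖ ‖v₂‖, norm_nonneg v₁]
    have hx₁ : xb + t • v₁ ∈ S ∩ Metric.closedBall xb rS :=
      ⟨h₁ t ⟨ht0, htlt.trans_le (min_le_left _ _)⟩, hnorm v₁ (le_max_left _ _)⟩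
    have hx₂ : xb + t • v₂ ∈ S ∩ Metric.closedBall xb rS :=
      ⟨h₂ t ⟨ht0, htlt.trans_le ((min_le_right _ _).trans (min_le_left _ _))⟩,
        hnorm v₂ (le_max_right _ _)⟩
    have hcomb := hSc hx₁ hx₂ ha hb hab
    have halg : a • (xb + t • v₁) + b • (xb + t • v₂) = xb + t • (a • v₁ + b • v₂) := by
      obtain rfl : b = 1 - a := by linarith
      match_scalars <;> ring
    rw [halg] at hcomb
    exact hcomb.1
  refine ⟨ν', ?_, ?_⟩
  · intro v
    constructor
    · filter_upwards [Ioo_mem_nhdsGT_of_mem (Set.left_mem_Ico.mpr (hTpos v))] with t ht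
      exact hfin _ (hball v t ht.1 ht.2)
    · have heq : (fun t : ℝ => ((merit G C (xb + t • v)).toReal - (merit G C xb).toReal) / t)
          = Q v := by
        funext t
        rw [hQ_def, hmer0]
        simp [hmtr_def]
      rw [heq]
      exact htend v
  -- Part 2
  intro α hα hαlt ℓ hℓ
  simp only [incrBound] at hαlt
  obtain ⟨aa, ⟨α₂, rfl, hα₂1, δmi, hδmi, hMI₂⟩, hlt⟩ := lt_sSup_iff.mp hαlt
  have hαα₂ : α < α₂ := by
    by_contra h
    push_neg at h
    exact absurd (ENNReal.ofReal_le_ofReal h) (not_le.mpr hlt)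
  have hMI : MetIncrWith G S C xb α δmi := by
    intro x hx r hr
    obtain ⟨z, hz, hsub⟩ := hMI₂ x hx r hr
    refine ⟨z, hz, fun p hp => hsub ?_⟩
    show Metric.infDist p (G z) ≤ α₂ * r
    exact le_trans hp (by nlinarith [hr.1] : α * r ≤ α₂ * r)
  have hα1 : (0:ℝ) < α - 1 := by linarith
  have hℓpos : (0:ℝ) < ℓ := lt_of_lt_of_le hℓf hℓ
  set c := ℓ / (α - 1) with hc_def
  have hcpos : 0 < c := by rw [hc_def]; positivity
  obtain ⟨δw, hδw, hweff'⟩ := hweff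
  obtain ⟨δL, hδL, hLip'⟩ := hLip
  set D0 := min δmi (min δw δL) with hD0_def
  have hD0 : 0 < D0 := by rw [hD0_def]; positivity
  have hD0mi : D0 ≤ δmi := min_le_left _ _
  have hD0w : D0 ≤ δw := (min_le_right _ _).trans (min_le_left _ _)
  have hD0L : D0 ≤ δL := (min_le_right _ _).trans (min_le_right _ _)
  set ε0 := (α - 1) * (D0 / 2) with hε0_def
  have hε0pos : 0 < ε0 := by rw [hε0_def]; positivity
  obtain ⟨δν, hδν, hν0⟩ := hνsmall ε0 hε0pos
  -- the key pointwise exclusion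
  have hStar : ∀ v ∈ feasDirCone S xb, f' v + (c * ν' v) • e ∈ (-(interior K))ᶜ := by
    rintro v ⟨δv, hδv, hvS⟩
    set B := min (min δν δbd) (D0 / 2) with hB_def
    have hB : 0 < B := by rw [hB_def]; positivity
    set tstar := min δv (B / (‖v‖ + 1)) with htstar_def
    have htstar : 0 < tstar := by rw [htstar_def]; positivity
    have hclosed : IsClosed ((-(interior K))ᶜ) := (isOpen_interior.neg).isClosed_compl
    have htends : Tendsto (fun t : ℝ => t⁻¹ • (f (xb + t • v) - f xb) + (c * Q v t) • e)
        (nhdsWithin 0 (Set.Ioi 0)) (nhds (f' v + (c * ν' v) • e)) :=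
      (hf' v).add (((htend v).const_mul c).smul_const e)
    refine hclosed.mem_of_tendsto htends ?_
    filter_upwards [Ioo_mem_nhdsGT_of_mem (Set.left_mem_Ico.mpr htstar)] with t ht
    obtain ⟨ht0, hts⟩ := ht
    have htv : t * ‖v‖ ≤ B := by
      have h1 : t < B / (‖v‖ + 1) := hts.trans_le (min_le_right _ _)
      rw [lt_div_iff₀ (by positivity)] at h1
      nlinarith [norm_nonneg v]
    have hdistxt : dist (xb + t • v) xb = t * ‖v‖ := by
      rw [dist_eq_norm, add_sub_cancel_left, norm_smul, Real.norm_eq_abs, abs_of_pos ht0]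
    have hxt_ball : ∀ ρ : ℝ, B ≤ ρ → xb + t • v ∈ Metric.closedBall xb ρ := by
      intro ρ hρ
      rw [Metric.mem_closedBall, hdistxt]
      linarith
    have hxt_S : xb + t • v ∈ S := hvS t ⟨ht0, hts.trans_le (min_le_left _ _)⟩
    have hfin_t : merit G C (xb + t • v) ≠ ⊤ :=
      hfin _ (hxt_ball δbd ((min_le_left _ _).trans (min_le_right _ _)))
    have hm_nonneg : 0 ≤ mtr (xb + t • v) := ENNReal.toReal_nonneg
    have hm_small : mtr (xb + t • v) ≤ ε0 :=
      ENNReal.toReal_le_of_le_ofReal hε0pos.le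
        (hν0 _ (hxt_ball δν ((min_le_left _ _).trans (min_le_left _ _))))
    have hm_lt : mtr (xb + t • v) < (α - 1) * δmi := by
      have : ε0 < (α - 1) * δmi := by
        rw [hε0_def]
        have : D0 / 2 < δmi := by linarith
        nlinarith
      linarith
    have hBD0 : B ≤ D0 / 2 := min_le_right _ _
    obtain ⟨z, ⟨hz_ball, hz_S⟩, hzC⟩ := aux_error_bound hCcl hCconv hCcone hC0 hG hα hMI
      ⟨hxt_ball δmi (by linarith), hxt_S⟩ hfin_t hm_lt
    have hz_xt : dist z (xb + t • v) ≤ mtr (xb + t • v) / (α - 1) := hz_ball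
    have hr_le : mtr (xb + t • v) / (α - 1) ≤ D0 / 2 := by
      rw [div_le_iff₀ hα1]
      rw [hε0_def] at hm_small
      nlinarith
    have hz_xb : dist z xb ≤ D0 := by
      calc dist z xb ≤ dist z (xb + t • v) + dist (xb + t • v) xb := dist_triangle _ _ _
        _ ≤ D0 / 2 + D0 / 2 := add_le_add (hz_xt.trans hr_le) (by rw [hdistxt]; linarith)
        _ = D0 := by ring
    have hwe : f xb - f z ∉ interior K :=
      hweff' z ⟨⟨hz_S, hzC⟩, by rw [Metric.mem_closedBall]; linarith⟩
    simp only [Set.mem_compl_iff]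
    intro hmemF
    have hFW : t⁻¹ • (f (xb + t • v) - f xb) + (c * Q v t) • e
        = t⁻¹ • (f (xb + t • v) - f xb + (c * mtr (xb + t • v)) • e) := by
      rw [smul_add, smul_smul]
      congr 2
      show c * (mtr (xb + t • v) / t) = t⁻¹ * (c * mtr (xb + t • v))
      field_simp
    rw [hFW, Set.mem_neg] at hmemF
    have hW : f xb - f (xb + t • v) - (c * mtr (xb + t • v)) • e ∈ interior K := by
      have h2 := hIntSmul t ht0 _ hmemF
      have heq2 : t • -(t⁻¹ • (f (xb + t • v) - f xb + (c * mtr (xb + t • v)) • e))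
          = f xb - f (xb + t • v) - (c * mtr (xb + t • v)) • e := by
        rw [smul_neg, smul_smul, mul_inv_cancel₀ ht0.ne', one_smul]
        module
      rwa [heq2] at h2
    have hA2 : f (xb + t • v) - f z + (ℓf * ‖(xb + t • v) - z‖) • e ∈ K :=
      hLip' _ (hxt_ball δL (by linarith)) z (by rw [Metric.mem_closedBall]; linarith)
    have hlam : 0 ≤ c * mtr (xb + t • v) - ℓf * ‖(xb + t • v) - z‖ := by
      have h1 : ‖(xb + t • v) - z‖ ≤ mtr (xb + t • v) / (α - 1) := by
        rw [← dist_eq_norm, dist_comm]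
        exact hz_xt
      have h2 : ℓf * ‖(xb + t • v) - z‖ ≤ ℓf * (mtr (xb + t • v) / (α - 1)) := by
        apply mul_le_mul_of_nonneg_left h1 hℓf.le
      have h3 : ℓf * (mtr (xb + t • v) / (α - 1)) ≤ ℓ * (mtr (xb + t • v) / (α - 1)) := by
        apply mul_le_mul_of_nonneg_right hℓ (by positivity)
      have h4 : c * mtr (xb + t • v) = ℓ * (mtr (xb + t • v) / (α - 1)) := by
        rw [hc_def]; ring
      linarith
    have hfinal : f xb - f z = (f xb - f (xb + t • v) - (c * mtr (xb + t • v)) • e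
        + (c * mtr (xb + t • v) - ℓf * ‖(xb + t • v) - z‖) • e)
        + (f (xb + t • v) - f z + (ℓf * ‖(xb + t • v) - z‖) • e) := by module
    exact hwe (hfinal ▸ hIntAdd _ (hIntAddNN _ hW _ hlam) _ hA2)
  -- separation
  set w : X → Y := fun v => f' v + (c * ν' v) • e with hw_def
  set A : Set Y := ⋃ v ∈ feasDirCone S xb, (fun y => y - w v) ⁻¹' (interior K) with hA_def
  have hmemA : ∀ y : Y, y ∈ A ↔ ∃ v ∈ feasDirCone S xb, y - w v ∈ interior K := by
    intro y
    rw [hA_def]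
    simp [Set.mem_iUnion]
  have hAopen : IsOpen A := by
    rw [hA_def]
    exact isOpen_biUnion fun v _ => isOpen_interior.preimage (continuous_id.sub continuous_const)
  have h0A : (0:Y) ∉ A := by
    rw [hmemA]
    rintro ⟨v, hv, hm⟩
    apply hStar v hv
    rw [Set.mem_neg]
    rw [zero_sub] at hm
    exact hm
  have hAconv : Convex ℝ A := by
    rintro y₁ hy₁ y₂ hy₂ a b ha hb hab
    rcases eq_or_lt_of_le ha with rfl | ha'
    · have hb1 : b = 1 := by linarith
      simpa [hb1] using hy₂
    rcases eq_or_lt_of_le hb with rfl | hb'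
    · have ha1 : a = 1 := by linarith
      simpa [ha1] using hy₁
    rw [hmemA] at hy₁ hy₂ ⊢
    obtain ⟨v₁, hv₁, hk₁⟩ := hy₁
    obtain ⟨v₂, hv₂, hk₂⟩ := hy₂
    obtain rfl : b = 1 - a := by linarith
    refine ⟨a • v₁ + (1 - a) • v₂, hDcomb v₁ hv₁ v₂ hv₂ a (1 - a) ha (by linarith) (by ring), ?_⟩
    have hνc : ν' (a • v₁ + (1 - a) • v₂) ≤ a * ν' v₁ + (1 - a) * ν' v₂ :=
      hν'conv v₁ v₂ a ha (by linarith)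
    have hp₁ : (v₁, f' v₁ + (2⁻¹ : ℝ) • (y₁ - w v₁)) ∈ {p : X × Y | p.2 - f' p.1 ∈ K} := by
      simp only [Set.mem_setOf_eq, add_sub_cancel_left]
      exact hKcone 2⁻¹ (by norm_num) _ (interior_subset hk₁)
    have hp₂ : (v₂, f' v₂ + (2⁻¹ : ℝ) • (y₂ - w v₂)) ∈ {p : X × Y | p.2 - f' p.1 ∈ K} := by
      simp only [Set.mem_setOf_eq, add_sub_cancel_left]
      exact hKcone 2⁻¹ (by norm_num) _ (interior_subset hk₂)
    have hepi' := hepi hp₁ hp₂ ha (by linarith : (0:ℝ) ≤ 1 - a) (by ring)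
    simp only [Prod.smul_mk, Prod.mk_add_mk, Set.mem_setOf_eq] at hepi'
    -- hepi' : a • (f' v₁ + 2⁻¹ • (y₁ - w v₁)) + (1-a) • (f' v₂ + 2⁻¹ • (y₂ - w v₂))
    --           - f' (a • v₁ + (1-a) • v₂) ∈ K
    have hm1 : (a / 2) • (y₁ - w v₁)
        + (c * (a * ν' v₁ + (1 - a) * ν' v₂ - ν' (a • v₁ + (1 - a) • v₂))) • e ∈ interior K :=
      hIntAddNN _ (hIntSmul (a / 2) (by linarith) _ hk₁) _
        (mul_nonneg hcpos.le (by linarith))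
    have hm2 := hIntAdd _ hm1 _ (hKcone ((1 - a) / 2) (by linarith) _ (interior_subset hk₂))
    have hm3 := hIntAdd _ hm2 _ hepi'
    have heqr : a • y₁ + (1 - a) • y₂ - w (a • v₁ + (1 - a) • v₂)
        = (a / 2) • (y₁ - w v₁)
            + (c * (a * ν' v₁ + (1 - a) * ν' v₂ - ν' (a • v₁ + (1 - a) • v₂))) • e
            + ((1 - a) / 2) • (y₂ - w v₂)
            + (a • (f' v₁ + (2⁻¹ : ℝ) • (y₁ - w v₁)) + (1 - a) • (f' v₂ + (2⁻¹ : ℝ) • (y₂ - w v₂))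
              - f' (a • v₁ + (1 - a) • v₂)) := by
      rw [hw_def]
      simp only
      module
    rw [heqr]
    exact hm3
  obtain ⟨q, hq⟩ := geometric_hahn_banach_point_open hAconv hAopen h0A
  have hq0 : ∀ y ∈ A, 0 < q y := by
    intro y hy
    have h1 := hq y hy
    rwa [map_zero] at h1
  have hintA : interior K ⊆ A := by
    intro y hy
    rw [hmemA]
    refine ⟨0, h0D, ?_⟩
    rw [hw_def]
    simp only [hf'0, hν'0, mul_zero, zero_smul, add_zero, sub_zero]
    exact hy
  have hqe : 0 < q e := hq0 e (hintA he)
  have hqK : ∀ y ∈ K, 0 ≤ q y := by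
    intro y hy
    by_contra hneg
    push_neg at hneg
    have hs : ∀ s : ℝ, 0 < s → 0 < s * q e + q y := by
      intro s hs
      have hm := hq0 _ (hintA (hIntAdd _ (hIntSmul s hs _ he) _ hy))
      rwa [map_add, map_smul, smul_eq_mul] at hm
    have h1 := hs (-(q y) / (2 * q e)) (div_pos (by linarith) (by linarith))
    have h2 : (-(q y) / (2 * q e)) * q e + q y = q y / 2 := by
      field_simp
      ring
    linarith
  have hqne : q ≠ 0 := by
    intro h
    rw [h] at hqe
    simp at hqe
  refine ⟨q, hqne, hqK, ?_⟩
  intro v hv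
  have hsA : ∀ s : ℝ, 0 < s → 0 < q (f' v) + c * ν' v * q e + s * q e := by
    intro s hs
    have hmem : w v + s • e ∈ A := by
      rw [hmemA]
      refine ⟨v, hv, ?_⟩
      rw [add_sub_cancel_left]
      exact hIntSmul s hs _ he
    have h1 := hq0 _ hmem
    rw [hw_def] at h1
    simp only [map_add, map_smul, smul_eq_mul] at h1
    linarith [h1]
  by_contra hneg
  push_neg at hneg
  have h1 := hsA (-(q (f' v) + c * ν' v * q e) / (2 * q e)) (div_pos (by linarith) (by linarith))
  have h2 : (-(q (f' v) + c * ν' v * q e) / (2 * q e)) * q e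
      = -(q (f' v) + c * ν' v * q e) / 2 := by
    field_simp
  linarith
end

section
/- Let X, Z be real Banach spaces, S ⊆ X a nonempty closed set, C ⊆ Z a proper closed convex cone with C ≠ {0}, and G : X ⇉ Z with G(x) ≠ ∅ for all x. Let R = S ∩ {x : G(x) ⊆ C} and x̄ ∈ R. Suppose that (i) G is lower semicontinuous at every point of some ball around x̄; (ii) G is metrically C-increasing around x̄ relative to S; (iii) G admits a positively homogeneous set-valued mapping H : X ⇉ Z as an outer prederivative at x̄. Then H⁺¹(C) ∩ WI(S,x̄) ⊆ T(R,x̄), where H⁺¹(C) = {v : H(v) ⊆ C}, WI(S,x̄) is the weak feasible direction cone to S at x̄, and T(R,x̄) is the contingent cone to R at x̄. -/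
open Filter Topology Metric Set Pointwise
open scoped ENNReal NNReal

lemma aux_add_mem {Z : Type*} [NormedAddCommGroup Z] [NormedSpace ℝ Z]
    {C : Set Z} (hCconv : Convex ℝ C)
    (hCcone : ∀ t : ℝ, 0 < t → ∀ z ∈ C, t • z ∈ C)
    {c c' : Z} (hc : c ∈ C) (hc' : c' ∈ C) : c + c' ∈ C := by
  have h := hCconv hc hc' (by norm_num : (0:ℝ) ≤ 1/2) (by norm_num : (0:ℝ) ≤ 1/2)
    (by norm_num : (1/2 : ℝ) + 1/2 = 1)
  have h2 := hCcone 2 (by norm_num) _ h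
  have h3 : (2:ℝ) • ((1/2 : ℝ) • c + (1/2 : ℝ) • c') = c + c' := by
    rw [smul_add, smul_smul, smul_smul]; norm_num
  rwa [h3] at h2

lemma keyStep {Z : Type*} [NormedAddCommGroup Z] [NormedSpace ℝ Z]
    (C : Set Z) (hCcl : IsClosed C) (hCconv : Convex ℝ C)
    (hCcone : ∀ t : ℝ, 0 < t → ∀ z ∈ C, t • z ∈ C) (hC0 : (0:Z) ∈ C)
    (Gx Gz : Set Z) (hGxne : Gx.Nonempty)
    (M r α : ℝ) (hM : 0 ≤ M) (hr : 0 < r) (hcond : M + r < α * r)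
    (hGxM : ∀ u ∈ Gx, Metric.infDist u C ≤ M)
    (hincl : enlarge Gz (α * r) ⊆ enlarge (Gx + C) r) :
    Gz ⊆ C := by
  have hCne : C.Nonempty := ⟨0, hC0⟩
  have hαr : 0 < α * r := lt_of_le_of_lt (by linarith) hcond
  intro w hw
  by_contra hwC
  have hd : 0 < Metric.infDist w C := (hCcl.notMem_iff_infDist_pos hCne).mp hwC
  set d := Metric.infDist w C with hdd
  have key : ∀ ε' > 0, d * (d + α * r) ≤ (M + r) * (d + ε') := by
    intro ε' hε'
    obtain ⟨c, hcC, hct⟩ := (Metric.infDist_lt_iff hCne).mp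
      (show Metric.infDist w C < d + ε' by rw [← hdd]; linarith)
    set t := dist w c with htdef
    have htd : d ≤ t := Metric.infDist_le_dist_of_mem hcC
    have ht0 : 0 < t := lt_of_lt_of_le hd htd
    set p := w + (α * r / t) • (w - c) with hpdef
    have hpw : dist p w = α * r := by
      have hsub : p - w = (α * r / t) • (w - c) := by rw [hpdef]; abel
      rw [dist_eq_norm, hsub, norm_smul, Real.norm_eq_abs, abs_of_pos (by positivity),
        ← dist_eq_norm, ← htdef]
      field_simp
    have hp1 : p ∈ enlarge Gz (α * r) := by
      simp only [enlarge, Set.mem_setOf_eq]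
      exact le_trans (Metric.infDist_le_dist_of_mem hw) hpw.le
    have hp2 : Metric.infDist p (Gx + C) ≤ r := by
      have := hincl hp1
      simpa [enlarge] using this
    have hupper : Metric.infDist p C ≤ r + M := by
      refine le_of_forall_pos_le_add fun ε hε => ?_
      have hne : (Gx + C).Nonempty := hGxne.add hCne
      obtain ⟨q, hq, hpq⟩ := (Metric.infDist_lt_iff hne).mp
        (show Metric.infDist p (Gx + C) < r + ε/2 by linarith)
      obtain ⟨u, hu, c₁, hc₁, rfl⟩ := Set.mem_add.mp hq
      obtain ⟨c', hc', huc'⟩ := (Metric.infDist_lt_iff hCne).mp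
        (show Metric.infDist u C < M + ε/2 by linarith [hGxM u hu])
      have h1 : Metric.infDist p C ≤ dist p (c' + c₁) :=
        Metric.infDist_le_dist_of_mem (aux_add_mem hCconv hCcone hc' hc₁)
      have h2 : dist p (c' + c₁) ≤ dist p (u + c₁) + dist (u + c₁) (c' + c₁) :=
        dist_triangle _ _ _
      have h3 : dist (u + c₁) (c' + c₁) = dist u c' := by
        simp [dist_add_right]
      linarith
    have hlower : d * (t + α * r) / t ≤ Metric.infDist p C := by
      haveI : Nonempty ↑C := hCne.to_subtype
      rw [Metric.infDist_eq_iInf]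
      refine le_ciInf fun cc => ?_
      obtain ⟨c'', hc''⟩ := cc
      set lam := (α * r) / (t + α * r) with hlam
      have hlam0 : 0 ≤ lam := by positivity
      have hlam1 : lam < 1 := by
        rw [hlam, div_lt_one (by positivity)]; linarith
      have hmidC : lam • c + (1 - lam) • c'' ∈ C :=
        hCconv hcC hc'' hlam0 (by linarith) (by ring)
      have ht0' : t ≠ 0 := ht0.ne'
      have hta : t + α * r ≠ 0 := by positivity
      have heq : w - (lam • c + (1 - lam) • c'') = (1 - lam) • (p - c'') := by
        rw [hpdef, hlam]
        match_scalars <;> (field_simp; try ring)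
      have hdist : dist w (lam • c + (1 - lam) • c'') = (1 - lam) * dist p c'' := by
        rw [dist_eq_norm, heq, norm_smul, Real.norm_eq_abs,
          abs_of_pos (by linarith : (0:ℝ) < 1 - lam), dist_eq_norm]
      have hdle : d ≤ (1 - lam) * dist p c'' := by
        rw [← hdist]
        exact Metric.infDist_le_dist_of_mem hmidC
      have h1ml : 1 - lam = t / (t + α * r) := by
        rw [hlam]; field_simp; ring
      rw [h1ml] at hdle
      have hdle' : d * (t + α * r) ≤ dist p c'' * t := by
        have h := mul_le_mul_of_nonneg_right hdle
          (le_of_lt (show (0:ℝ) < t + α * r by positivity))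
        calc d * (t + α * r) ≤ (t / (t + α * r) * dist p c'') * (t + α * r) := h
          _ = dist p c'' * t := by field_simp
      rw [div_le_iff₀ ht0]
      exact hdle'
    have hfin : d * (t + α * r) ≤ (r + M) * t := by
      have := le_trans hlower hupper
      rw [div_le_iff₀ ht0] at this
      linarith [this]
    nlinarith [mul_le_mul_of_nonneg_left htd hd.le,
      mul_le_mul_of_nonneg_left hct.le (show (0:ℝ) ≤ r + M by linarith), hfin]
  have keyfin : d * (d + α * r) ≤ (M + r) * d := by
    refine le_of_forall_pos_le_add fun ε hε => ?_
    have hMr : 0 < M + r := by linarith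
    have hk := key (ε / (M + r)) (by positivity)
    calc d * (d + α * r) ≤ (M + r) * (d + ε / (M + r)) := hk
      _ = (M + r) * d + ε := by field_simp
  nlinarith [keyfin, mul_lt_mul_of_pos_right hcond hd, mul_pos hd hd]

/-- inner tangential approximation of the solution set of a set-valued
inclusion via outer prederivatives (weak feasible direction cone version). -/
theorem statement_8
    {X Z : Type*} [NormedAddCommGroup X] [NormedSpace ℝ X] [CompleteSpace X]
    [NormedAddCommGroup Z] [NormedSpace ℝ Z] [CompleteSpace Z]
    (S : Set X) (hSne : S.Nonempty) (hScl : IsClosed S)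
    (C : Set Z) (hCcl : IsClosed C) (hCconv : Convex ℝ C)
    (hCcone : ∀ t : ℝ, 0 < t → ∀ z ∈ C, t • z ∈ C) (hC0 : (0:Z) ∈ C)
    (hCne0 : C ≠ {0}) (hCneuniv : C ≠ Set.univ)
    (G : X → Set Z) (hG : ∀ x, (G x).Nonempty)
    (xb : X) (hxbS : xb ∈ S) (hxbG : G xb ⊆ C)
    (hlsc : LscAround G xb) (hmi : MetIncr G S C xb)
    (H : X → Set Z) (hH : OuterPrederivAt G H xb) :
    upperInv H C ∩ weakFeasDirCone S xb ⊆ contingentCone (S ∩ {x | G x ⊆ C}) xb := by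
  obtain ⟨α, hα1, δ₀, hδ₀, hMI⟩ := hmi
  have hα0 : (0:ℝ) < α - 1 := by linarith
  rintro v ⟨hvH, hvW⟩
  have hvH' : H v ⊆ C := hvH
  have hδ : ∀ n : ℕ, ∃ δ > 0, ∀ x ∈ Metric.closedBall xb δ,
      G x ⊆ G xb + H (x - xb) + Metric.closedBall 0 ((1/((n:ℝ)+1)) * ‖x - xb‖) :=
    fun n => hH.2 (1/((n:ℝ)+1)) (by positivity)
  choose δ hδpos hδG using hδ
  have hv1 : (0:ℝ) < ‖v‖ + 1 := by positivity
  set e : ℕ → ℝ := fun n =>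
    min (min (1/((n:ℝ)+1)) (δ n)) (min δ₀ (δ₀ * (α - 1))) / (‖v‖ + 1) with he_def
  have he : ∀ n, 0 < e n := fun n => by
    apply div_pos _ hv1
    exact lt_min (lt_min (by positivity) (hδpos n)) (lt_min hδ₀ (by positivity))
  choose t htIoo htS using fun n => hvW (e n) (he n)
  have ht0 : ∀ n, 0 < t n := fun n => (htIoo n).1
  have htb : ∀ n, t n * (‖v‖ + 1) <
      min (min (1/((n:ℝ)+1)) (δ n)) (min δ₀ (δ₀ * (α - 1))) := by
    intro n
    have h1 : t n < e n := (htIoo n).2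
    have h2 : t n * (‖v‖ + 1) < e n * (‖v‖ + 1) := by
      exact mul_lt_mul_of_pos_right h1 hv1
    rw [he_def] at h2
    simpa [div_mul_cancel₀ _ hv1.ne'] using h2
  have main : ∀ n : ℕ, ∃ z, z ∈ S ∧ G z ⊆ C ∧
      ‖z - (xb + t n • v)‖ ≤ t n * (‖v‖ + 1) / (((n:ℝ)+1) * (α - 1)) := by
    intro n
    set tn := t n with htn
    have htn0 : 0 < tn := ht0 n
    have hb := htb n
    have hbδn : tn * (‖v‖ + 1) < δ n :=
      lt_of_lt_of_le hb (le_trans (min_le_left _ _) (min_le_right _ _))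
    have hbδ₀ : tn * (‖v‖ + 1) < δ₀ :=
      lt_of_lt_of_le hb (le_trans (min_le_right _ _) (min_le_left _ _))
    have hbδα : tn * (‖v‖ + 1) < δ₀ * (α - 1) :=
      lt_of_lt_of_le hb (le_trans (min_le_right _ _) (min_le_right _ _))
    have htv : tn * ‖v‖ ≤ tn * (‖v‖ + 1) := by nlinarith [norm_nonneg v, htn0]
    set xn := xb + tn • v with hxn
    have hnorm : ‖xn - xb‖ = tn * ‖v‖ := by
      rw [hxn, add_sub_cancel_left, norm_smul, Real.norm_eq_abs, abs_of_pos htn0]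
    set N : ℝ := (n:ℝ) + 1 with hN
    have hN1 : (1:ℝ) ≤ N := by rw [hN]; exact_mod_cast Nat.one_le_iff_ne_zero.mpr (by simp)
    have hN0 : (0:ℝ) < N := by linarith
    set M : ℝ := 1/N * (tn * ‖v‖) with hM
    have hM0 : 0 ≤ M := by positivity
    have hGxM : ∀ w ∈ G xn, Metric.infDist w C ≤ M := by
      intro w hw
      have hmem := hδG n xn (by
        rw [Metric.mem_closedBall, dist_eq_norm, hnorm]
        linarith) hw
      rw [show xn - xb = tn • v by rw [hxn]; abel, hH.1 tn htn0 v] at hmem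
      obtain ⟨q, hq, b, hbmem, rfl⟩ := Set.mem_add.mp hmem
      obtain ⟨u, hu, h', hh', rfl⟩ := Set.mem_add.mp hq
      obtain ⟨h, hh, rfl⟩ := Set.mem_smul_set.mp hh'
      have huC : u + tn • h ∈ C :=
        aux_add_mem hCconv hCcone (hxbG hu) (hCcone tn htn0 h (hvH' hh))
      have hbn : ‖b‖ ≤ 1/N * (tn * ‖v‖) := by
        have hb' := Metric.mem_closedBall.mp hbmem
        rw [dist_zero_right, norm_smul, Real.norm_eq_abs, abs_of_pos htn0] at hb'
        exact hb'
      calc Metric.infDist (u + tn • h + b) C ≤ dist (u + tn • h + b) (u + tn • h) :=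
            Metric.infDist_le_dist_of_mem huC
        _ = ‖b‖ := by rw [dist_eq_norm]; congr 1; abel
        _ ≤ M := by rw [hM]; exact hbn
    set r : ℝ := tn * (‖v‖ + 1) / (N * (α - 1)) with hrdef
    have hr0 : 0 < r := by rw [hrdef]; positivity
    have hrδ : r < δ₀ := by
      rw [hrdef, div_lt_iff₀ (by positivity)]
      have hs1 : α - 1 ≤ N * (α - 1) := le_mul_of_one_le_left (le_of_lt hα0) hN1
      have hs2 : δ₀ * (α - 1) ≤ δ₀ * (N * (α - 1)) :=
        mul_le_mul_of_nonneg_left hs1 hδ₀.le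
      linarith
    have hcond : M + r < α * r := by
      have h1 : (α - 1) * r = 1/N * (tn * (‖v‖ + 1)) := by
        rw [hrdef]; field_simp
      have h2 : M < 1/N * (tn * (‖v‖ + 1)) := by
        rw [hM]
        apply mul_lt_mul_of_pos_left _ (by positivity : (0:ℝ) < 1/N)
        nlinarith
      nlinarith [h1, h2]
    obtain ⟨z, ⟨hz1, hz2⟩, hincl⟩ := hMI xn ⟨by
        rw [Metric.mem_closedBall, dist_eq_norm, hnorm]; linarith, htS n⟩ r ⟨hr0, hrδ⟩
    refine ⟨z, hz2, keyStep C hCcl hCconv hCcone hC0 (G xn) (G z) (hG xn)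
      M r α hM0 hr0 hcond hGxM hincl, ?_⟩
    have hzd := Metric.mem_closedBall.mp hz1
    rw [dist_eq_norm] at hzd
    exact hzd
  choose z hzS hzC hzdist using main
  refine ⟨fun n => (t n)⁻¹ • (z n - xb), t, ?_, ?_, ht0, ?_⟩
  · rw [tendsto_iff_norm_sub_tendsto_zero]
    have hlim : Filter.Tendsto (fun n : ℕ => (‖v‖ + 1) / (α - 1) * (1/((n:ℝ)+1)))
        Filter.atTop (nhds 0) := by
      have := tendsto_one_div_add_atTop_nhds_zero_nat.const_mul ((‖v‖ + 1) / (α - 1))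
      simpa using this
    apply squeeze_zero (fun n => norm_nonneg _) (fun n => ?_) hlim
    have hne : t n ≠ 0 := (ht0 n).ne'
    have hsub : (t n)⁻¹ • (z n - xb) - v = (t n)⁻¹ • (z n - (xb + t n • v)) := by
      match_scalars <;> field_simp
    rw [hsub, norm_smul, Real.norm_eq_abs, abs_of_pos (inv_pos.mpr (ht0 n))]
    have hd := hzdist n
    have h2 : (t n)⁻¹ * ‖z n - (xb + t n • v)‖ ≤
        (t n)⁻¹ * (t n * (‖v‖ + 1) / (((n:ℝ)+1) * (α - 1))) :=
      mul_le_mul_of_nonneg_left hd (inv_nonneg.mpr (ht0 n).le)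
    refine le_trans h2 (le_of_eq ?_)
    have hcancel : (t n)⁻¹ * (t n * (‖v‖ + 1) / (((n:ℝ)+1) * (α - 1))) =
        (t n)⁻¹ * t n * ((‖v‖ + 1) / (((n:ℝ)+1) * (α - 1))) := by ring
    rw [hcancel, inv_mul_cancel₀ hne, one_mul]
    have hne2 : ((n:ℝ)+1) ≠ 0 := by positivity
    have hne3 : α - 1 ≠ 0 := hα0.ne'
    rw [div_mul_div_comm, mul_one, mul_comm (α - 1) (((n:ℝ)+1))]
  · apply squeeze_zero (fun n => (ht0 n).le) (fun n => ?_)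
      tendsto_one_div_add_atTop_nhds_zero_nat
    have hb := htb n
    have h1 : t n * (‖v‖ + 1) ≤ 1/((n:ℝ)+1) :=
      le_of_lt (lt_of_lt_of_le hb (le_trans (min_le_left _ _) (min_le_left _ _)))
    nlinarith [norm_nonneg v, ht0 n]
  · intro n
    have hzn : xb + t n • ((t n)⁻¹ • (z n - xb)) = z n := by
      rw [smul_inv_smul₀ (ht0 n).ne']
      abel
    rw [hzn]
    exact ⟨hzS n, hzC n⟩
end
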